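/- Let L be a solvable Leibniz A-algebra. Then L splits over each term in its derived series: for every i ≥ 0 there is a subalgebra B of L with L = L^(i) ∔ B (vector space direct sum). Moreover, for each i ≥ 0 the Cartan subalgebras of L^(i)/L^(i+2) are precisely the subalgebras complementary to L^(i+1)/L^(i+2) (i.e. the subalgebras C/L^(i+2) with L^(i)/L^(i+2) = L^(i+1)/L^(i+2) ∔ C/L^(i+2)). -/

import Mathlib

/-- A (right) Leibniz algebra structure on an `F`-vector space `L`:
a bilinear bracket satisfying `[x,[y,z]] = [[x,y],z] - [[x,z],y]`. -/
structure LeibnizAlg (F : Type*) (L : Type*) [Field F] [AddCommGroup L] [Module F L] where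
  bracket : L →ₗ[F] L →ₗ[F] L
  leibniz : ∀ x y z : L,
    bracket x (bracket y z) = bracket (bracket x y) z - bracket (bracket x z) y

namespace LeibnizAlg

variable {F : Type*} {L : Type*} [Field F] [AddCommGroup L] [Module F L]

/-- The product `[M, N]` of two subspaces: the span of all brackets `[m, n]`. -/
def prod (A : LeibnizAlg F L) (M N : Submodule F L) : Submodule F L :=
  Submodule.span F {z : L | ∃ m ∈ M, ∃ n ∈ N, z = A.bracket m n}

/-- A subalgebra: a subspace closed under the product. -/
def IsSubalgebra (A : LeibnizAlg F L) (S : Submodule F L) : Prop :=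
  A.prod S S ≤ S

/-- A (two-sided) ideal: `[I, L] ⊆ I` and `[L, I] ⊆ I`. -/
def IsIdeal (A : LeibnizAlg F L) (I : Submodule F L) : Prop :=
  A.prod I ⊤ ≤ I ∧ A.prod ⊤ I ≤ I

/-- Lower central series of a subspace `U`: `lcs U 0 = U = U¹`,
`lcs U k = U^(k+1)`, i.e. `lcs U (k+1) = [lcs U k, U]`. -/
def lcs (A : LeibnizAlg F L) (U : Submodule F L) : ℕ → Submodule F L
  | 0 => U
  | k + 1 => A.prod (lcs A U k) U

/-- `U` is nilpotent: `U^(n+1) = 0` for some `n`. -/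
def IsNilpotentSub (A : LeibnizAlg F L) (U : Submodule F L) : Prop :=
  ∃ n : ℕ, A.lcs U n = ⊥

/-- `U` is abelian: `[U, U] = 0`. -/
def IsAbelian (A : LeibnizAlg F L) (U : Submodule F L) : Prop :=
  A.prod U U = ⊥

/-- An `A`-algebra: every nilpotent subalgebra is abelian. -/
def IsAAlgebra (A : LeibnizAlg F L) : Prop :=
  ∀ U : Submodule F L, A.IsSubalgebra U → A.IsNilpotentSub U → A.IsAbelian U

/-- Derived series: `derSeries 0 = L`, `derSeries (k+1) = [derSeries k, derSeries k]`. -/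
def derSeries (A : LeibnizAlg F L) : ℕ → Submodule F L
  | 0 => ⊤
  | k + 1 => A.prod (derSeries A k) (derSeries A k)

/-- `L` is solvable: some term of the derived series vanishes. -/
def IsSolvable (A : LeibnizAlg F L) : Prop :=
  ∃ n : ℕ, A.derSeries n = ⊥

/-- The centralizer `Z_L(U)` of a subspace `U`. -/
def centralizer (A : LeibnizAlg F L) (U : Submodule F L) : Submodule F L where
  carrier := {x : L | ∀ u ∈ U, A.bracket x u = 0 ∧ A.bracket u x = 0}
  add_mem' := by
    intro a b ha hb u hu
    refine ⟨?_, ?_⟩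
    · rw [map_add, LinearMap.add_apply, (ha u hu).1, (hb u hu).1, add_zero]
    · rw [map_add, (ha u hu).2, (hb u hu).2, add_zero]
  zero_mem' := by
    intro u hu
    refine ⟨?_, ?_⟩
    · rw [map_zero, LinearMap.zero_apply]
    · rw [map_zero]
  smul_mem' := by
    intro c a ha u hu
    refine ⟨?_, ?_⟩
    · rw [map_smul, LinearMap.smul_apply, (ha u hu).1, smul_zero]
    · rw [map_smul, (ha u hu).2, smul_zero]

/-- The centre of the subalgebra `M`: elements of `M` centralizing `M`. -/
def centerOf (A : LeibnizAlg F L) (M : Submodule F L) : Submodule F L :=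
  M ⊓ A.centralizer M

/-- `N` is the nilradical: the largest nilpotent ideal. -/
def IsNilradical (A : LeibnizAlg F L) (N : Submodule F L) : Prop :=
  A.IsIdeal N ∧ A.IsNilpotentSub N ∧
    ∀ I : Submodule F L, A.IsIdeal I → A.IsNilpotentSub I → I ≤ N

/-- A minimal ideal: a nonzero ideal containing no ideal other than `0` and itself. -/
def IsMinimalIdeal (A : LeibnizAlg F L) (I : Submodule F L) : Prop :=
  A.IsIdeal I ∧ I ≠ ⊥ ∧ ∀ J : Submodule F L, A.IsIdeal J → J ≤ I → J = ⊥ ∨ J = I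

/-- A maximal subalgebra. -/
def IsMaximalSubalgebra (A : LeibnizAlg F L) (M : Submodule F L) : Prop :=
  A.IsSubalgebra M ∧ M ≠ ⊤ ∧
    ∀ S : Submodule F L, A.IsSubalgebra S → M ≤ S → S = M ∨ S = ⊤

/-- `L` is φ-free: every ideal contained in all maximal subalgebras is zero. -/
def IsPhiFree (A : LeibnizAlg F L) : Prop :=
  ∀ I : Submodule F L, A.IsIdeal I →
    (∀ M : Submodule F L, A.IsMaximalSubalgebra M → I ≤ M) → I = ⊥

/-- `Asoc L`: the sum of the abelian minimal ideals. -/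
def asoc (A : LeibnizAlg F L) : Submodule F L :=
  sSup {I : Submodule F L | A.IsMinimalIdeal I ∧ A.IsAbelian I}

/-- A Cartan subalgebra: a nilpotent, self-normalizing subalgebra. -/
def IsCartan (A : LeibnizAlg F L) (C : Submodule F L) : Prop :=
  A.IsSubalgebra C ∧ A.IsNilpotentSub C ∧
    ∀ x : L, (∀ c ∈ C, A.bracket x c ∈ C ∧ A.bracket c x ∈ C) → x ∈ C

/-- A maximal nilpotent subalgebra. -/
def IsMaxNilpotentSubalgebra (A : LeibnizAlg F L) (U : Submodule F L) : Prop :=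
  A.IsSubalgebra U ∧ A.IsNilpotentSub U ∧
    ∀ V : Submodule F L, A.IsSubalgebra V → A.IsNilpotentSub V → U ≤ V → V = U

end LeibnizAlg


namespace LeibnizAlg
variable {F : Type*} {L : Type*} [Field F] [AddCommGroup L] [Module F L]

open Submodule

section Basic
variable (A : LeibnizAlg F L)
lemma mem_prod {U V : Submodule F L} {x y : L} (hx : x ∈ U) (hy : y ∈ V) :
    A.bracket x y ∈ A.prod U V := subset_span ⟨x, hx, y, hy, rfl⟩
lemma prod_le_iff {U V W : Submodule F L} :
    A.prod U V ≤ W ↔ ∀ x ∈ U, ∀ y ∈ V, A.bracket x y ∈ W := by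
  constructor
  · intro h x hx y hy; exact h (A.mem_prod hx hy)
  · intro h
    refine span_le.2 ?_
    rintro z ⟨m, hm, n, hn, rfl⟩
    exact h m hm n hn
lemma prod_mono {U U' V V' : Submodule F L} (hU : U ≤ U') (hV : V ≤ V') :
    A.prod U V ≤ A.prod U' V' := by
  rw [prod_le_iff]; intro x hx y hy; exact A.mem_prod (hU hx) (hV hy)

lemma leib (x y z : L) :
    A.bracket x (A.bracket y z) = A.bracket (A.bracket x y) z - A.bracket (A.bracket x z) y :=
  A.leibniz x y z

lemma deriv (x y c : L) :
    A.bracket (A.bracket x y) c = A.bracket (A.bracket x c) y + A.bracket x (A.bracket y c) := by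
  have := A.leibniz x y c
  rw [this]; abel

lemma rr_comm {c c' : L} (h : A.bracket c c' = 0) (x : L) :
    A.bracket (A.bracket x c) c' = A.bracket (A.bracket x c') c := by
  have := A.leibniz x c c'
  rw [h] at this; simp only [map_zero] at this
  exact (sub_eq_zero.mp this.symm)

lemma lr_comm {c c' : L} (h : A.bracket c c' = 0) (x : L) :
    A.bracket (A.bracket c x) c' = A.bracket c (A.bracket x c') := by
  have := A.deriv c x c'
  rw [h] at this
  simpa using this
end Basic

def dS (A : LeibnizAlg F L) (S : Submodule F L) : ℕ → Submodule F L
  | 0 => S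
  | k + 1 => A.prod (A.dS S k) (A.dS S k)

section DS
variable (A : LeibnizAlg F L)

@[simp] lemma dS_zero (S : Submodule F L) : A.dS S 0 = S := rfl
lemma dS_succ (S : Submodule F L) (k : ℕ) : A.dS S (k+1) = A.prod (A.dS S k) (A.dS S k) := rfl

lemma dS_ideal {S : Submodule F L} (hS : A.IsSubalgebra S) (i : ℕ) :
    A.prod (A.dS S i) S ≤ A.dS S i ∧ A.prod S (A.dS S i) ≤ A.dS S i ∧ A.dS S i ≤ S := by
  induction i with
  | zero => exact ⟨hS, hS, le_rfl⟩
  | succ i ih =>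
    obtain ⟨h1, h2, h3⟩ := ih
    refine ⟨?_, ?_, ?_⟩
    · rw [prod_le_iff]
      intro z hz s hs
      have key : A.prod (A.dS S i) (A.dS S i) ≤
          Submodule.comap (A.bracket.flip s) (A.prod (A.dS S i) (A.dS S i)) := by
        rw [prod_le_iff]
        intro d hd d' hd'
        simp only [Submodule.mem_comap, LinearMap.flip_apply]
        rw [A.deriv d d' s]
        exact add_mem (A.mem_prod (h1 (A.mem_prod hd hs)) hd')
          (A.mem_prod hd (h1 (A.mem_prod hd' hs)))
      rw [dS_succ] at hz ⊢
      exact key hz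
    · rw [prod_le_iff]
      intro s hs z hz
      have key : A.prod (A.dS S i) (A.dS S i) ≤
          Submodule.comap (A.bracket s) (A.prod (A.dS S i) (A.dS S i)) := by
        rw [prod_le_iff]
        intro d hd d' hd'
        simp only [Submodule.mem_comap]
        rw [A.leib s d d']
        exact sub_mem (A.mem_prod (h2 (A.mem_prod hs hd)) hd')
          (A.mem_prod (h2 (A.mem_prod hs hd')) hd)
      rw [dS_succ] at hz ⊢
      exact key hz
    · rw [dS_succ]
      exact le_trans (le_trans (A.prod_mono le_rfl h3) h1) h3

lemma dS_succ_le {S : Submodule F L} (hS : A.IsSubalgebra S) (i : ℕ) :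
    A.dS S (i+1) ≤ A.dS S i := by
  rw [dS_succ]
  exact le_trans (A.prod_mono le_rfl (A.dS_ideal hS i).2.2) (A.dS_ideal hS i).1

lemma dS_antitone {S : Submodule F L} (hS : A.IsSubalgebra S) {i j : ℕ} (h : i ≤ j) :
    A.dS S j ≤ A.dS S i := by
  induction j with
  | zero => simp_all
  | succ j ih =>
    rcases Nat.lt_or_ge i (j+1) with hj | hj
    · exact le_trans (A.dS_succ_le hS j) (ih (Nat.lt_succ_iff.1 hj))
    · have : i = j + 1 := le_antisymm h hj
      subst this; rfl

lemma dS_le_self {S : Submodule F L} (hS : A.IsSubalgebra S) (i : ℕ) : A.dS S i ≤ S :=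
  (A.dS_ideal hS i).2.2

lemma dS_subalg {S : Submodule F L} (hS : A.IsSubalgebra S) (i : ℕ) :
    A.IsSubalgebra (A.dS S i) := by
  cases i with
  | zero => exact hS
  | succ i =>
    have : A.prod (A.dS S (i+1)) (A.dS S (i+1)) ≤ A.prod (A.dS S i) (A.dS S i) :=
      A.prod_mono (A.dS_succ_le hS i) (A.dS_succ_le hS i)
    rw [← dS_succ] at this
    exact this

lemma dS_mono {S T : Submodule F L} (h : S ≤ T) (i : ℕ) : A.dS S i ≤ A.dS T i := by
  induction i with
  | zero => exact h
  | succ i ih => rw [dS_succ, dS_succ]; exact A.prod_mono ih ih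

lemma dS_shift (S : Submodule F L) (k j : ℕ) : A.dS (A.dS S k) j = A.dS S (k + j) := by
  induction j with
  | zero => rfl
  | succ j ih => rw [dS_succ, ih]; rfl

@[simp] lemma dS_bot (i : ℕ) : A.dS ⊥ i = ⊥ := by
  induction i with
  | zero => rfl
  | succ i ih =>
    rw [dS_succ, ih]
    refine le_antisymm ?_ bot_le
    rw [prod_le_iff]; intro x hx y hy
    rw [Submodule.mem_bot] at hx ⊢; rw [hx]; simp

lemma dS_eq_bot_of_le {S : Submodule F L} {i j : ℕ} (h : A.dS S i = ⊥) (hij : i ≤ j) :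
    A.dS S j = ⊥ := by
  have := A.dS_shift S i (j - i)
  rw [h, dS_bot, Nat.add_sub_cancel' hij] at this
  exact this.symm

end DS

section Chain
variable (A : LeibnizAlg F L)
@[simp] lemma prod_bot_left (V : Submodule F L) : A.prod ⊥ V = ⊥ := by
  refine le_antisymm ?_ bot_le
  rw [prod_le_iff]
  rintro x hx y -
  rw [mem_bot] at hx ⊢
  rw [hx]; simp
@[simp] lemma prod_bot_right (U : Submodule F L) : A.prod U ⊥ = ⊥ := by
  refine le_antisymm ?_ bot_le
  rw [prod_le_iff]
  rintro x - y hy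
  rw [mem_bot] at hy ⊢
  rw [hy]; simp
def rmul (c : L) : L →ₗ[F] L := A.bracket.flip c
@[simp] lemma rmul_apply (c x : L) : A.rmul c x = A.bracket x c := rfl

lemma prod_span_singleton (W : Submodule F L) (c : L) :
    A.prod W (span F {c}) = Submodule.map (A.rmul c) W := by
  refine le_antisymm ?_ ?_
  · rw [prod_le_iff]
    intro x hx y hy
    rcases mem_span_singleton.1 hy with ⟨a, rfl⟩
    rw [map_smul]
    exact smul_mem _ a ⟨x, hx, rfl⟩
  · rintro z ⟨w, hw, rfl⟩
    exact A.mem_prod hw (mem_span_singleton_self c)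

lemma prod_iSup_left {ι : Sort*} (X : ι → Submodule F L) (C : Submodule F L) :
    A.prod (⨆ i, X i) C = ⨆ i, A.prod (X i) C := by
  refine le_antisymm ?_ (iSup_le fun i => A.prod_mono (le_iSup X i) le_rfl)
  rw [prod_le_iff]
  intro x hx c hc
  have : (⨆ i, X i) ≤ Submodule.comap (A.bracket.flip c) (⨆ i, A.prod (X i) C) := by
    refine iSup_le fun i => ?_
    intro w hw
    simp only [Submodule.mem_comap, LinearMap.flip_apply]
    exact le_iSup (fun i => A.prod (X i) C) i (A.mem_prod hw hc)
  exact this hx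

lemma prod_span_le_of_inv {W D : Submodule F L} (S : Set L) (hW : W ≤ D)
    (hinv : ∀ c ∈ S, ∀ d ∈ D, A.bracket d c ∈ D) :
    A.prod W (span F S) ≤ D := by
  rw [prod_le_iff]
  intro x hx y hy
  have : span F S ≤ Submodule.comap (A.bracket x) D := by
    rw [span_le]
    intro c hc
    exact hinv c hc x (hW hx)
  exact this hy

lemma pow_push {D : Submodule F L} {c c' : L}
    (hDinv : ∀ d ∈ D, A.bracket d c ∈ D)
    (hcomm : ∀ d ∈ D, A.bracket (A.bracket d c) c' = A.bracket (A.bracket d c') c) :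
    ∀ (i : ℕ), ∀ y ∈ D, A.bracket (((A.rmul c)^i) y) c' = ((A.rmul c)^i) (A.bracket y c') := by
  intro i
  induction i with
  | zero => intro y _; simp
  | succ i ih =>
    intro y hy
    have hstep : ∀ z : L, ((A.rmul c)^(i+1)) z = ((A.rmul c)^i) (A.bracket z c) := by
      intro z; rw [pow_succ]; rfl
    rw [hstep y, ih _ (hDinv y hy), hcomm y hy, ← hstep (A.bracket y c')]

/-- pushing a commuting right-multiplication power out of a product -/
lemma prod_map_pow_le {D Y : Submodule F L} {c : L} (S : Set L)
    (hY : Y ≤ D)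
    (hDinv : ∀ d ∈ D, A.bracket d c ∈ D)
    (hcomm : ∀ c' ∈ S, ∀ d ∈ D, A.bracket (A.bracket d c) c' = A.bracket (A.bracket d c') c)
    (i : ℕ) :
    A.prod (Submodule.map ((A.rmul c)^i) Y) (span F S) ≤
      Submodule.map ((A.rmul c)^i) (A.prod Y (span F S)) := by
  rw [prod_le_iff]
  rintro x ⟨y, hy, rfl⟩ v hv
  have : span F S ≤ Submodule.comap (A.bracket (((A.rmul c)^i) y))
      (Submodule.map ((A.rmul c)^i) (A.prod Y (span F S))) := by
    rw [span_le]
    intro c' hc'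
    simp only [SetLike.mem_coe, Submodule.mem_comap]
    rw [A.pow_push hDinv (fun d hd => hcomm c' hc' d hd) i y (hY hy)]
    exact ⟨A.bracket y c', A.mem_prod hy (subset_span hc'), rfl⟩
  exact this hv

lemma map_pow_bot {D : Submodule F L} {c : L} {E : ℕ}
    (hnil : ∀ d ∈ D, ((A.rmul c)^E) d = 0) {Y : Submodule F L} (hY : Y ≤ D)
    {i : ℕ} (hi : E ≤ i) : Submodule.map ((A.rmul c)^i) Y = ⊥ := by
  rw [eq_bot_iff]
  rintro z ⟨y, hy, rfl⟩
  have : (A.rmul c)^i = (A.rmul c)^(i - E) * (A.rmul c)^E := by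
    rw [← pow_add]; congr 1; omega
  rw [Submodule.mem_bot, this]
  show ((A.rmul c)^(i-E)) (((A.rmul c)^E) y) = 0
  rw [hnil y (hY hy), map_zero]

/-- main chain lemma: iterated products with a "commuting, nilpotently-acting" span die -/
lemma chain_bot : ∀ (cs : List L) (D : Submodule F L),
    (∀ c ∈ cs, ∀ d ∈ D, A.bracket d c ∈ D) →
    (∀ c ∈ cs, ∀ c' ∈ cs, ∀ d ∈ D, A.bracket (A.bracket d c) c' = A.bracket (A.bracket d c') c) →
    (∀ c ∈ cs, ∀ d ∈ D, ((A.rmul c)^(Module.finrank F L + 1)) d = 0) →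
    ∃ m, ∀ W ≤ D, (fun W => A.prod W (span F {x | x ∈ cs}))^[m] W = ⊥ := by
  intro cs
  induction cs with
  | nil =>
    intro D _ _ _
    refine ⟨1, fun W _ => ?_⟩
    have : {x : L | x ∈ ([] : List L)} = (∅ : Set L) := by simp
    simp [this]
  | cons c cs ih =>
    intro D hinv hcomm hnil
    obtain ⟨m', hm'⟩ := ih D (fun c' hc' => hinv c' (List.mem_cons_of_mem c hc'))
      (fun a ha b hb => hcomm a (List.mem_cons_of_mem c ha) b (List.mem_cons_of_mem c hb))
      (fun c' hc' => hnil c' (List.mem_cons_of_mem c hc'))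
    set E := Module.finrank F L + 1 with hE
    set f := A.rmul c with hf
    set S : Set L := {x | x ∈ cs} with hS
    set iter : Submodule F L → Submodule F L := fun W => A.prod W (span F S) with hiter
    have hcmem : c ∈ c :: cs := List.mem_cons_self
    have hDc : ∀ d ∈ D, A.bracket d c ∈ D := hinv c hcmem
    have hSsub : ∀ c' ∈ S, ∀ d ∈ D, A.bracket d c' ∈ D :=
      fun c' hc' => hinv c' (List.mem_cons_of_mem c hc')
    have hIterD : ∀ (j : ℕ), ∀ W ≤ D, iter^[j] W ≤ D := by
      intro j
      induction j with
      | zero => intro W hW; simpa using hW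
      | succ j ihj =>
        intro W hW
        rw [Function.iterate_succ_apply']
        exact A.prod_span_le_of_inv S (ihj W hW) hSsub
    have hspan : span F {x : L | x ∈ c :: cs} = span F {c} ⊔ span F S := by
      rw [← Submodule.span_union]
      congr 1
      ext x
      simp [hS, List.mem_cons, or_comm]
    -- binomial bound
    have key : ∀ (m : ℕ), ∀ W ≤ D,
        (fun W => A.prod W (span F {x | x ∈ c :: cs}))^[m] W ≤
        ⨆ (i : ℕ) (_ : i ≤ m), Submodule.map (f^i) (iter^[m - i] W) := by
      intro m
      induction m with
      | zero =>
        intro W hW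
        refine le_trans (le_of_eq (Function.iterate_zero_apply _ W)) ?_
        refine le_trans ?_
          (le_iSup₂ (f := fun i (_ : i ≤ 0) => Submodule.map (f^i) (iter^[0-i] W)) 0 (le_refl 0))
        intro x hx
        refine ⟨x, by simpa using hx, ?_⟩
        simp
      | succ m ihm =>
        intro W hW
        rw [Function.iterate_succ_apply']
        refine le_trans (A.prod_mono (ihm W hW) le_rfl) ?_
        rw [hspan]
        have expand : A.prod (⨆ (i : ℕ) (_ : i ≤ m), Submodule.map (f^i) (iter^[m-i] W))
            (span F {c} ⊔ span F S) ≤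
            ⨆ (i : ℕ) (_ : i ≤ m),
              (A.prod (Submodule.map (f^i) (iter^[m-i] W)) (span F {c}) ⊔
               A.prod (Submodule.map (f^i) (iter^[m-i] W)) (span F S)) := by
          rw [prod_iSup_left]
          refine iSup_le fun i => ?_
          rw [prod_iSup_left]
          refine iSup_le fun hi => ?_
          refine le_iSup₂_of_le i hi ?_
          rw [prod_le_iff]
          intro x hx y hy
          rcases mem_sup.1 hy with ⟨a, ha, b, hb, rfl⟩
          rw [map_add]
          exact add_mem (le_sup_left (α := Submodule F L)
              (A.mem_prod hx ha)) (le_sup_right (α := Submodule F L) (A.mem_prod hx hb))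
        refine le_trans expand (iSup₂_le fun i hi => sup_le ?_ ?_)
        · -- the f-step
          rw [prod_span_singleton]
          have hmap : Submodule.map (A.rmul c) (Submodule.map (f^i) (iter^[m-i] W)) =
              Submodule.map (f^(i+1)) (iter^[m-i] W) := by
            rw [← hf, pow_succ', Module.End.mul_eq_comp, Submodule.map_comp]
          rw [hmap]
          refine le_iSup₂_of_le (i+1) (by omega) ?_
          rw [show m + 1 - (i+1) = m - i from by omega]
        · -- the S-step
          have h1 : iter^[m-i] W ≤ D := hIterD _ W hW
          refine le_trans (A.prod_map_pow_le S h1 hDc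
            (fun c' hc' d hd => hcomm c hcmem c' (List.mem_cons_of_mem c hc') d hd) i) ?_
          refine le_iSup₂_of_le i (le_trans hi (Nat.le_succ m)) ?_
          have h2 : iter^[m+1-i] W = A.prod (iter^[m-i] W) (span F S) := by
            rw [show m+1-i = (m-i)+1 from by omega, Function.iterate_succ_apply']
          rw [h2]
    -- conclude
    refine ⟨E + m', fun W hW => ?_⟩
    rw [eq_bot_iff]
    refine le_trans (key (E + m') W hW) ?_
    refine iSup₂_le fun i hi => ?_
    rcases Nat.lt_or_ge i E with hiE | hiE
    · -- m - i ≥ m'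
      have hmi : E + m' - i = (E - i) + m' := by omega
      have : iter^[E + m' - i] W = iter^[E - i] (iter^[m'] W) := by
        rw [hmi, Function.iterate_add_apply]
      rw [this, hm' W hW]
      have : iter^[E - i] ⊥ = (⊥ : Submodule F L) := by
        clear this
        induction (E - i) with
        | zero => rfl
        | succ k ihk =>
          rw [Function.iterate_succ_apply', ihk]
          exact A.prod_bot_left _
      rw [this]
      simp
    · rw [A.map_pow_bot (hnil c hcmem) (hIterD _ W hW) hiE]

end Chain

section Fitting
variable (A : LeibnizAlg F L) [FiniteDimensional F L]

lemma ker_pow_stab (f : L →ₗ[F] L) {m : ℕ} (hm : Module.finrank F L + 1 ≤ m) :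
    LinearMap.ker (f^m) = LinearMap.ker (f^(Module.finrank F L + 1)) := by
  have h1 : LinearMap.ker (f^m) = LinearMap.ker (f^(Module.finrank F L)) :=
    Module.End.ker_pow_eq_ker_pow_finrank_of_le (by omega)
  have h2 : LinearMap.ker (f^(Module.finrank F L + 1)) =
      LinearMap.ker (f^(Module.finrank F L)) :=
    Module.End.ker_pow_eq_ker_pow_finrank_of_le (by omega)
  rw [h1, h2]

lemma map_pow_le (f : L →ₗ[F] L) {V : Submodule F L} (hV : Submodule.map f V ≤ V) (k : ℕ) :
    Submodule.map (f^k) V ≤ V := by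
  induction k with
  | zero => rintro x ⟨y, hy, rfl⟩; simpa using hy
  | succ k ih =>
    rw [pow_succ', Module.End.mul_eq_comp, Submodule.map_comp]
    exact le_trans (Submodule.map_mono ih) hV

lemma map_pow_stab (f : L →ₗ[F] L) {V : Submodule F L} (hV : Submodule.map f V ≤ V) (j : ℕ) :
    Submodule.map (f^(Module.finrank F L + 1 + j)) V =
      Submodule.map (f^(Module.finrank F L + 1)) V := by
  set n := Module.finrank F L with hn
  -- once two consecutive images agree, the chain is constant
  have prop : ∀ k, Submodule.map (f^(k+1)) V = Submodule.map (f^k) V →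
      ∀ i, Submodule.map (f^(k+i)) V = Submodule.map (f^k) V := by
    intro k hk i
    induction i with
    | zero => rfl
    | succ i ih =>
      have : Submodule.map (f^(k+i+1)) V = Submodule.map f (Submodule.map (f^(k+i)) V) := by
        rw [pow_succ', Module.End.mul_eq_comp, Submodule.map_comp]
      rw [show k + (i+1) = k+i+1 from rfl, this, ih, ← Submodule.map_comp,
        ← Module.End.mul_eq_comp, ← pow_succ']
      exact hk
  have dec : ∀ k, Submodule.map (f^(k+1)) V ≤ Submodule.map (f^k) V := by
    intro k
    rw [pow_succ, Module.End.mul_eq_comp, Submodule.map_comp]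
    exact Submodule.map_mono hV
  -- find stabilization point k ≤ n
  have exk : ∃ k ≤ n, Submodule.map (f^(k+1)) V = Submodule.map (f^k) V := by
    by_contra hcon
    push_neg at hcon
    have strict : ∀ k ≤ n, Submodule.map (f^(k+1)) V < Submodule.map (f^k) V :=
      fun k hk => lt_of_le_of_ne (dec k) (hcon k hk)
    have rk : ∀ k ≤ n + 1, Module.finrank F (Submodule.map (f^k) V) + k ≤
        Module.finrank F (Submodule.map (f^(0:ℕ)) V) := by
      intro k hk
      induction k with
      | zero => simp
      | succ k ih =>
        have h1 := Submodule.finrank_lt_finrank_of_lt (strict k (by omega))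
        have h2 := ih (by omega)
        omega
    have := rk (n+1) le_rfl
    have hle : Module.finrank F (Submodule.map (f^(0:ℕ)) V) ≤ n := by
      rw [hn]; exact Submodule.finrank_le _
    omega
  obtain ⟨k, hkn, hk⟩ := exk
  have h1 := prop k hk (n + 1 + j - k)
  have h2 := prop k hk (n + 1 - k)
  rw [show k + (n+1+j-k) = n+1+j from by omega] at h1
  rw [show k + (n+1-k) = n+1 from by omega] at h2
  rw [h1, h2]

lemma fit1 (f : L →ₗ[F] L) (V : Submodule F L) (hV : Submodule.map f V ≤ V) :
    ((V ⊓ LinearMap.ker (f^(Module.finrank F L + 1))) ⊔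
        Submodule.map (f^(Module.finrank F L + 1)) V = V) ∧
    ((V ⊓ LinearMap.ker (f^(Module.finrank F L + 1))) ⊓
        Submodule.map (f^(Module.finrank F L + 1)) V = ⊥) ∧
    (Submodule.map f (Submodule.map (f^(Module.finrank F L + 1)) V) =
        Submodule.map (f^(Module.finrank F L + 1)) V) ∧
    (LinearMap.ker f ⊓ Submodule.map (f^(Module.finrank F L + 1)) V = ⊥) := by
  set E := Module.finrank F L + 1 with hE
  have hfix : Submodule.map f (Submodule.map (f^E) V) = Submodule.map (f^E) V := by
    rw [← Submodule.map_comp, ← Module.End.mul_eq_comp, ← pow_succ']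
    exact map_pow_stab f hV 1
  refine ⟨?_, ?_, hfix, ?_⟩
  · refine le_antisymm (sup_le (le_trans inf_le_left le_rfl) (map_pow_le f hV E)) ?_
    intro x hx
    have h2E : Submodule.map (f^(E+E)) V = Submodule.map (f^E) V := map_pow_stab f hV E
    have hfEx : (f^E) x ∈ Submodule.map (f^(E+E)) V := by
      rw [h2E]; exact ⟨x, hx, rfl⟩
    obtain ⟨w, hw, hfw⟩ := hfEx
    have hy : (f^E) w ∈ Submodule.map (f^E) V := ⟨w, hw, rfl⟩
    have hyV : (f^E) w ∈ V := map_pow_le f hV E hy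
    have hcomp : (f^E) ((f^E) w) = (f^(E+E)) w := by
      rw [← Module.End.mul_apply, ← pow_add]
    have hker : x - (f^E) w ∈ LinearMap.ker (f^E) := by
      rw [LinearMap.mem_ker, map_sub, hcomp, hfw, sub_self]
    have := Submodule.add_mem_sup (Submodule.mem_inf.2 ⟨sub_mem hx hyV, hker⟩) hy
    simpa using this
  · rw [eq_bot_iff]
    rintro v ⟨⟨hvV, hvk⟩, w, hw, rfl⟩
    have hvk0 : (f^E) ((f^E) w) = 0 := LinearMap.mem_ker.mp hvk
    have hw2 : w ∈ LinearMap.ker (f^(E+E)) := by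
      rw [LinearMap.mem_ker, pow_add, Module.End.mul_apply]
      exact hvk0
    rw [ker_pow_stab f (by omega : Module.finrank F L + 1 ≤ E + E)] at hw2
    have : (f^E) w = 0 := LinearMap.mem_ker.mp hw2
    rw [Submodule.mem_bot, this]
  · rw [eq_bot_iff]
    rintro v ⟨hvk, w, hw, rfl⟩
    have hvk0 : f ((f^E) w) = 0 := LinearMap.mem_ker.mp hvk
    have hw2 : w ∈ LinearMap.ker (f^(E+1)) := by
      rw [LinearMap.mem_ker, pow_succ', Module.End.mul_apply]
      exact hvk0
    rw [ker_pow_stab f (by omega : Module.finrank F L + 1 ≤ E + 1)] at hw2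
    have : (f^E) w = 0 := LinearMap.mem_ker.mp hw2
    rw [Submodule.mem_bot, this]

/-- joint generalized kernel of a list of right multiplications -/
noncomputable def jker (cs : List L) : Submodule F L :=
  ⨅ (a : L) (_ : a ∈ cs), LinearMap.ker ((A.rmul a)^(Module.finrank F L + 1))

lemma mem_jker {cs : List L} {x : L} :
    x ∈ A.jker cs ↔ ∀ a ∈ cs, ((A.rmul a)^(Module.finrank F L + 1)) x = 0 := by
  simp [jker, Submodule.mem_iInf, LinearMap.mem_ker]

lemma jker_nil : A.jker ([] : List L) = ⊤ := by
  simp [jker]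

lemma jker_cons (a : L) (cs : List L) :
    A.jker (a :: cs) = LinearMap.ker ((A.rmul a)^(Module.finrank F L + 1)) ⊓ A.jker cs := by
  refine le_antisymm (le_inf (iInf₂_le a (List.mem_cons_self))
    (le_iInf₂ fun b hb => iInf₂_le b (List.mem_cons_of_mem a hb))) ?_
  refine le_iInf₂ fun b hb => ?_
  rcases List.mem_cons.1 hb with rfl | hb
  · exact inf_le_left
  · exact le_trans inf_le_right (iInf₂_le b hb)

lemma pow_comm_apply {f g : L →ₗ[F] L} (h : ∀ x, g (f x) = f (g x)) (k : ℕ) (x : L) :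
    g ((f^k) x) = (f^k) (g x) := by
  induction k generalizing x with
  | zero => simp
  | succ k ih =>
    have h1 : ∀ z : L, (f^(k+1)) z = (f^k) (f z) := by
      intro z; rw [pow_succ]; rfl
    rw [h1, ih (f x), h, ← h1]

lemma fitjoint : ∀ (cs : List L) (V : Submodule F L),
    (∀ a ∈ cs, ∀ b ∈ cs, ∀ x : L,
      A.bracket (A.bracket x a) b = A.bracket (A.bracket x b) a) →
    (∀ a ∈ cs, Submodule.map (A.rmul a) V ≤ V) →
    ∃ V₁ : Submodule F L, V₁ ≤ V ∧
      ((V ⊓ A.jker cs) ⊔ V₁ = V) ∧ ((V ⊓ A.jker cs) ⊓ V₁ = ⊥) ∧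
      V₁ ≤ A.prod V (Submodule.span F {x | x ∈ cs}) ∧
      (∀ g : L →ₗ[F] L, Submodule.map g V ≤ V →
        (∀ a ∈ cs, ∀ x : L, g (A.bracket x a) = A.bracket (g x) a) →
        Submodule.map g V₁ ≤ V₁) := by
  intro cs
  induction cs with
  | nil =>
    intro V _ _
    refine ⟨⊥, bot_le, ?_, ?_, bot_le, ?_⟩
    · rw [jker_nil]; simp
    · simp
    · intro g _ _; simp
  | cons a cs ih =>
    intro V hcomm hinv
    set E := Module.finrank F L + 1 with hE
    set f := A.rmul a with hf
    have hfV : Submodule.map f V ≤ V := hinv a (List.mem_cons_self)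
    obtain ⟨hsup, hinf, hfix, hkerinf⟩ := fit1 f V hfV
    set K := V ⊓ LinearMap.ker (f^E) with hK
    set I := Submodule.map (f^E) V with hI
    have hKV : K ≤ V := inf_le_left
    have hIV : I ≤ V := map_pow_le f hfV E
    -- rmul b for b ∈ cs commutes with f pointwise
    have hbf : ∀ b ∈ cs, ∀ x : L, (A.rmul b) (f x) = f ((A.rmul b) x) := by
      intro b hb x
      have := hcomm a (List.mem_cons_self) b (List.mem_cons_of_mem a hb) x
      simpa [hf] using this
    have hinvK : ∀ b ∈ cs, Submodule.map (A.rmul b) K ≤ K := by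
      rintro b hb z ⟨x, hx, rfl⟩
      obtain ⟨hxV, hxk⟩ := Submodule.mem_inf.1 hx
      rw [LinearMap.mem_ker] at hxk
      refine Submodule.mem_inf.2 ⟨hinv b (List.mem_cons_of_mem a hb) ⟨x, hxV, rfl⟩, ?_⟩
      rw [LinearMap.mem_ker, ← pow_comm_apply (hbf b hb) E x, hxk, map_zero]
    obtain ⟨W₁, hW₁K, hWsup, hWinf, hWprod, hWinvar⟩ := ih K
      (fun b hb b' hb' => hcomm b (List.mem_cons_of_mem a hb) b' (List.mem_cons_of_mem a hb'))
      hinvK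
    have hVJ : V ⊓ A.jker (a :: cs) = K ⊓ A.jker cs := by
      rw [jker_cons, hK, ← hE]
      rw [inf_assoc]
    refine ⟨I ⊔ W₁, sup_le hIV (le_trans hW₁K hKV), ?_, ?_, ?_, ?_⟩
    · rw [hVJ, sup_comm I W₁, ← sup_assoc, hWsup]
      exact hsup
    · rw [hVJ, sup_comm I W₁, eq_bot_iff]
      have hKinter : K ⊓ (W₁ ⊔ I) = W₁ := by
        rw [inf_comm, sup_inf_assoc_of_le I hW₁K, inf_comm I K, hinf, sup_bot_eq]
      refine le_trans (le_inf inf_le_left ?_) (le_of_eq hWinf)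
      exact le_trans (inf_le_inf_right _ inf_le_left) (le_of_eq hKinter)
    · refine sup_le ?_ ?_
      · rintro z ⟨x, hx, rfl⟩
        have hfE : (f^E) x = A.bracket ((f^(E-1)) x) a := by
          have : f^E = f * f^(E-1) := by
            conv_lhs => rw [show E = (E-1)+1 from by omega]
            rw [pow_succ']
          rw [this]; rfl
        rw [hfE]
        exact A.mem_prod (map_pow_le f hfV (E-1) ⟨x, hx, rfl⟩)
          (Submodule.subset_span (List.mem_cons_self))
      · refine le_trans hWprod (A.prod_mono hKV (Submodule.span_mono ?_))
        intro x hx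
        exact List.mem_cons_of_mem a hx
    · intro g hgV hgc
      rw [Submodule.map_sup]
      refine sup_le ?_ ?_
      · rintro z ⟨w, ⟨x, hx, rfl⟩, rfl⟩
        refine Submodule.mem_sup_left ?_
        have : g ((f^E) x) = (f^E) (g x) :=
          pow_comm_apply (fun y => hgc a (List.mem_cons_self) y) E x
        rw [this]
        exact ⟨g x, hgV ⟨x, hx, rfl⟩, rfl⟩
      · refine le_trans ?_ le_sup_right
        refine hWinvar g ?_ (fun b hb => hgc b (List.mem_cons_of_mem a hb))
        rintro z ⟨x, hx, rfl⟩
        obtain ⟨hxV, hxk⟩ := Submodule.mem_inf.1 hx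
        rw [LinearMap.mem_ker] at hxk
        refine Submodule.mem_inf.2 ⟨hgV ⟨x, hxV, rfl⟩, ?_⟩
        rw [LinearMap.mem_ker, ← pow_comm_apply (fun y => hgc a (List.mem_cons_self) y) E x,
          hxk, map_zero]

end Fitting

def lcs' (A : LeibnizAlg F L) (U : Submodule F L) : ℕ → Submodule F L
  | 0 => U
  | k + 1 => A.prod (A.lcs' U k) U

def IsNilpotentSub' (A : LeibnizAlg F L) (U : Submodule F L) : Prop :=
  ∃ n : ℕ, A.lcs' U n = ⊥

def IsAAlgebra' (A : LeibnizAlg F L) : Prop :=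
  ∀ U : Submodule F L, A.IsSubalgebra U → A.IsNilpotentSub' U → A.prod U U = ⊥

section Glue
variable (A : LeibnizAlg F L)

lemma prod_sup_left (U U' V : Submodule F L) :
    A.prod (U ⊔ U') V = A.prod U V ⊔ A.prod U' V := by
  refine le_antisymm ?_ (sup_le (A.prod_mono le_sup_left le_rfl) (A.prod_mono le_sup_right le_rfl))
  rw [prod_le_iff]
  intro x hx y hy
  rcases Submodule.mem_sup.1 hx with ⟨a, ha, b, hb, rfl⟩
  rw [map_add, LinearMap.add_apply]
  exact Submodule.add_mem_sup (A.mem_prod ha hy) (A.mem_prod hb hy)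

lemma prod_sup_right (U V V' : Submodule F L) :
    A.prod U (V ⊔ V') = A.prod U V ⊔ A.prod U V' := by
  refine le_antisymm ?_ (sup_le (A.prod_mono le_rfl le_sup_left) (A.prod_mono le_rfl le_sup_right))
  rw [prod_le_iff]
  intro x hx y hy
  rcases Submodule.mem_sup.1 hy with ⟨a, ha, b, hb, rfl⟩
  rw [map_add]
  exact Submodule.add_mem_sup (A.mem_prod hx ha) (A.mem_prod hx hb)

lemma map_prod_le {U V : Submodule F L} (p : L →ₗ[F] L)
    (hp : ∀ x ∈ U, ∀ y ∈ V, p (A.bracket x y) = A.bracket (p x) (p y)) :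
    Submodule.map p (A.prod U V) = A.prod (Submodule.map p U) (Submodule.map p V) := by
  refine le_antisymm ?_ ?_
  · rw [Submodule.map_le_iff_le_comap, prod_le_iff]
    intro x hx y hy
    rw [Submodule.mem_comap, hp x hx y hy]
    exact A.mem_prod (Submodule.mem_map_of_mem hx) (Submodule.mem_map_of_mem hy)
  · rw [prod_le_iff]
    rintro x ⟨a, ha, rfl⟩ y ⟨b, hb, rfl⟩
    rw [← hp a ha b hb]
    exact Submodule.mem_map_of_mem (A.mem_prod ha hb)

lemma abelian_pointwise {C : Submodule F L} (h : A.prod C C = ⊥) :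
    ∀ c ∈ C, ∀ c' ∈ C, A.bracket c c' = 0 := by
  intro c hc c' hc'
  have := A.mem_prod hc hc'
  rw [h, Submodule.mem_bot] at this
  exact this

lemma exists_span_list [FiniteDimensional F L] (C : Submodule F L) :
    ∃ cs : List L, (∀ c ∈ cs, c ∈ C) ∧ Submodule.span F {x | x ∈ cs} = C := by
  obtain ⟨s, hs⟩ := (IsNoetherian.noetherian C : C.FG)
  refine ⟨s.toList, ?_, ?_⟩
  · intro c hc
    rw [← hs]
    exact Submodule.subset_span (by simpa using hc)
  · rw [← hs]
    congr 1
    ext x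
    simp

/-- two-sided normalizer of C inside S -/
noncomputable def nrm (S C : Submodule F L) : Submodule F L :=
  S ⊓ ((⨅ (c : C), Submodule.comap (A.bracket.flip (c : L)) C) ⊓
       (⨅ (c : C), Submodule.comap (A.bracket (c : L)) C))

lemma mem_nrm {S C : Submodule F L} {x : L} :
    x ∈ A.nrm S C ↔ x ∈ S ∧ ∀ c ∈ C, A.bracket x c ∈ C ∧ A.bracket c x ∈ C := by
  simp only [nrm, Submodule.mem_inf, Submodule.mem_iInf, Submodule.mem_comap,
    LinearMap.flip_apply, Subtype.forall]
  constructor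
  · rintro ⟨h1, h2, h3⟩
    exact ⟨h1, fun c hc => ⟨h2 c hc, h3 c hc⟩⟩
  · rintro ⟨h1, h2⟩
    exact ⟨h1, fun c hc => (h2 c hc).1, fun c hc => (h2 c hc).2⟩

lemma nrm_subalg {S C : Submodule F L} (hS : A.IsSubalgebra S) :
    A.IsSubalgebra (A.nrm S C) := by
  rw [IsSubalgebra, prod_le_iff]
  intro x hx y hy
  obtain ⟨hxS, hxn⟩ := A.mem_nrm.1 hx
  obtain ⟨hyS, hyn⟩ := A.mem_nrm.1 hy
  rw [mem_nrm]
  refine ⟨hS (A.mem_prod hxS hyS), fun c hc => ⟨?_, ?_⟩⟩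
  · rw [A.deriv x y c]
    exact add_mem ((hyn _ ((hxn c hc).1)).2) ((hxn _ ((hyn c hc).1)).1)
  · rw [A.leib c x y]
    exact sub_mem ((hyn _ ((hxn c hc).2)).2) ((hxn _ ((hyn c hc).2)).2)

lemma proj_exists (X Y V : Submodule F L) (hinf : X ⊓ Y = ⊥) (hsup : X ⊔ Y = V) :
    ∃ p : L →ₗ[F] L, (∀ x ∈ X, p x = x) ∧ (∀ y ∈ Y, p y = 0) ∧ (∀ v : L, p v ∈ X) ∧
      (∀ v ∈ V, v - p v ∈ Y) := by
  have hXV : X ≤ V := le_trans le_sup_left (le_of_eq hsup)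
  have hYV : Y ≤ V := le_trans le_sup_right (le_of_eq hsup)
  obtain ⟨Q, hQ⟩ := Submodule.exists_isCompl V
  have hcompl : IsCompl X (Y ⊔ Q) := by
    constructor
    · rw [disjoint_iff, eq_bot_iff]
      intro x hx
      obtain ⟨hxX, hxYQ⟩ := Submodule.mem_inf.1 hx
      obtain ⟨y, hy, q, hq, rfl⟩ := Submodule.mem_sup.1 hxYQ
      have hqV : q ∈ V := by
        have : q = (y + q) - y := by abel
        rw [this]
        exact sub_mem (hXV hxX) (hYV hy)
      have hq0 : q = 0 := by
        have := hQ.disjoint.le_bot (Submodule.mem_inf.2 ⟨hqV, hq⟩)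
        simpa using this
      rw [hq0, add_zero] at hxX ⊢
      have := hinf ▸ Submodule.mem_inf.2 ⟨hxX, hy⟩
      simpa using this
    · rw [codisjoint_iff, ← sup_assoc, hsup]
      exact hQ.codisjoint.eq_top
  set pr := Submodule.linearProjOfIsCompl X (Y ⊔ Q) hcompl with hpr
  refine ⟨X.subtype.comp pr, ?_, ?_, ?_, ?_⟩
  · intro x hx
    have h0 : pr x = ⟨x, hx⟩ := Submodule.linearProjOfIsCompl_apply_left hcompl ⟨x, hx⟩
    show X.subtype (pr x) = x
    rw [h0]
    rfl
  · intro y hy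
    have h0 : pr y = 0 := Submodule.linearProjOfIsCompl_apply_right' hcompl
      (Submodule.mem_sup_left hy)
    show X.subtype (pr y) = 0
    rw [h0]
    rfl
  · intro v
    exact (pr v).2
  · intro v hv
    have hker : v - X.subtype (pr v) ∈ Y ⊔ Q := by
      have h1 : pr (v - X.subtype (pr v)) = 0 := by
        rw [map_sub]
        have : pr (X.subtype (pr v)) = pr v :=
          Submodule.linearProjOfIsCompl_apply_left hcompl (pr v)
        rw [this, sub_self]
      have := Submodule.linearProjOfIsCompl_ker hcompl
      rw [← this]
      exact LinearMap.mem_ker.2 h1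
    have hmem : v - X.subtype (pr v) ∈ (Y ⊔ Q) ⊓ V :=
      Submodule.mem_inf.2 ⟨hker, sub_mem hv (hXV (pr v).2)⟩
    have hmod : (Y ⊔ Q) ⊓ V = Y := by
      rw [sup_inf_assoc_of_le Q hYV]
      have : Q ⊓ V = ⊥ := by rw [inf_comm, ← disjoint_iff]; exact hQ.disjoint
      rw [this, sup_bot_eq]
    rw [hmod] at hmem
    exact hmem

/-- If C is abelian, V₀ is a "joint Fitting-null" C-invariant abelian space, then C ⊔ V₀ is a
nilpotent subalgebra; in an A-algebra it is then abelian. -/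
lemma fitting_null_central [FiniteDimensional F L] (hA : A.IsAAlgebra') {C V₀ : Submodule F L}
    {cs : List L} (hcsC : ∀ c ∈ cs, c ∈ C) (hcs : Submodule.span F {x | x ∈ cs} = C)
    (hCab : A.prod C C = ⊥)
    (hCV : A.prod C V₀ ≤ V₀) (hVC : A.prod V₀ C ≤ V₀) (hVV : A.prod V₀ V₀ = ⊥)
    (hnil : ∀ c ∈ cs, ∀ v ∈ V₀, ((A.rmul c)^(Module.finrank F L + 1)) v = 0) :
    A.prod (C ⊔ V₀) (C ⊔ V₀) = ⊥ := by
  set U := C ⊔ V₀ with hU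
  have habel := A.abelian_pointwise hCab
  have hUU : A.prod U U ≤ V₀ := by
    rw [hU, A.prod_sup_left, A.prod_sup_right, A.prod_sup_right]
    refine sup_le (sup_le ?_ hCV) (sup_le hVC ?_)
    · rw [hCab]; exact bot_le
    · rw [hVV]; exact bot_le
  have hsub : A.IsSubalgebra U := le_trans hUU le_sup_right
  obtain ⟨m, hm⟩ := A.chain_bot cs V₀
    (fun c hc d hd => hVC (A.mem_prod hd (hcsC c hc)))
    (fun c hc c' hc' d hd => A.rr_comm (habel c (hcsC c hc) c' (hcsC c' hc')) d)
    (fun c hc d hd => hnil c hc d hd)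
  have hiter : (fun W => A.prod W (Submodule.span F {x | x ∈ cs})) = fun W => A.prod W C := by
    rw [hcs]
  rw [hiter] at hm
  -- lcs' U (k+1) ≤ iter^[k] (prod U U)
  have hlcs : ∀ k : ℕ, A.lcs' U (k+1) ≤ (fun W => A.prod W C)^[k] (A.prod U U) := by
    intro k
    induction k with
    | zero => exact le_rfl
    | succ k ih =>
      have hXV : (fun W => A.prod W C)^[k] (A.prod U U) ≤ V₀ := by
        clear ih
        induction k with
        | zero => exact hUU
        | succ k ih2 =>
          rw [Function.iterate_succ_apply']
          exact le_trans (A.prod_mono ih2 le_rfl) hVC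
      show A.prod (A.lcs' U (k+1)) U ≤ _
      rw [Function.iterate_succ_apply', hU, A.prod_sup_right]
      refine sup_le (A.prod_mono ih le_rfl) ?_
      have : A.prod (A.lcs' U (k+1)) V₀ ≤ A.prod V₀ V₀ :=
        A.prod_mono (le_trans ih hXV) le_rfl
      rw [hVV] at this
      exact le_trans this bot_le
  have hnilU : A.IsNilpotentSub' U := by
    refine ⟨m + 1, le_antisymm ?_ bot_le⟩
    refine le_trans (hlcs m) ?_
    rw [hm (A.prod U U) hUU]
  exact hA U hsub hnilU

end Glue

section Supp
variable (A : LeibnizAlg F L) [FiniteDimensional F L]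

/-- kernels of powers of a right multiplication multiply like a derivation -/
lemma dk {c : L} : ∀ (n a b : ℕ) (x y : L), a + b ≤ n + 1 →
    ((A.rmul c)^a) x = 0 → ((A.rmul c)^b) y = 0 →
    ((A.rmul c)^n) (A.bracket x y) = 0 := by
  intro n
  induction n with
  | zero =>
    intro a b x y hab hx hy
    rcases Nat.eq_zero_or_pos a with rfl | ha
    · simp only [pow_zero, Module.End.one_apply] at hx
      rw [hx]; simp
    · have hb : b = 0 := by omega
      subst hb
      simp only [pow_zero, Module.End.one_apply] at hy
      rw [hy]; simp
  | succ n ih =>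
    intro a b x y hab hx hy
    rcases Nat.eq_zero_or_pos a with rfl | ha
    · simp only [pow_zero, Module.End.one_apply] at hx
      rw [hx]; simp
    rcases Nat.eq_zero_or_pos b with rfl | hb
    · simp only [pow_zero, Module.End.one_apply] at hy
      rw [hy]; simp
    have hstep : ∀ z : L, ((A.rmul c)^(n+1)) z = ((A.rmul c)^n) ((A.rmul c) z) := by
      intro z; rw [pow_succ]; rfl
    have hbr : (A.rmul c) (A.bracket x y) =
        A.bracket (A.bracket x c) y + A.bracket x (A.bracket y c) := by
      simpa using A.deriv x y c
    rw [hstep, hbr, map_add]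
    have h1 : ((A.rmul c)^n) (A.bracket (A.bracket x c) y) = 0 := by
      refine ih (a-1) b (A.bracket x c) y (by omega) ?_ hy
      have : ((A.rmul c)^(a-1)) ((A.rmul c) x) = ((A.rmul c)^a) x := by
        conv_rhs => rw [show a = (a-1)+1 from by omega]
        rw [pow_succ]; rfl
      rw [show (A.bracket x c : L) = (A.rmul c) x from rfl, this, hx]
    have h2 : ((A.rmul c)^n) (A.bracket x (A.bracket y c)) = 0 := by
      refine ih a (b-1) x (A.bracket y c) (by omega) hx ?_
      have : ((A.rmul c)^(b-1)) ((A.rmul c) y) = ((A.rmul c)^b) y := by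
        conv_rhs => rw [show b = (b-1)+1 from by omega]
        rw [pow_succ]; rfl
      rw [show (A.bracket y c : L) = (A.rmul c) y from rfl, this, hy]
    rw [h1, h2, add_zero]

/-- existence of a subalgebra complement to M' in a metabelian subalgebra M -/
lemma supp (hA : A.IsAAlgebra') {M : Submodule F L}
    (hM : A.IsSubalgebra M) (hmet : A.prod (A.prod M M) (A.prod M M) = ⊥) :
    ∃ C : Submodule F L, A.IsSubalgebra C ∧ C ≤ M ∧
      C ⊓ A.prod M M = ⊥ ∧ C ⊔ A.prod M M = M := by
  classical
  set E := Module.finrank F L + 1 with hE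
  set M' := A.prod M M with hM'
  have habel' : ∀ x ∈ M', ∀ y ∈ M', A.bracket x y = 0 := A.abelian_pointwise hmet
  set P : Submodule F L → Prop :=
    fun C => A.IsSubalgebra C ∧ C ≤ M ∧ C ⊔ M' = M with hP
  have hex : ∃ n : ℕ, ∃ C, P C ∧ Module.finrank F C = n :=
    ⟨Module.finrank F M, M, ⟨hM, le_rfl, sup_eq_left.2 hM⟩, rfl⟩
  obtain ⟨C, hPC, hrk⟩ := Nat.find_spec hex
  have hmin : ∀ C', P C' → Nat.find hex ≤ Module.finrank F C' :=
    fun C' h => Nat.find_min' hex ⟨C', h, rfl⟩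
  obtain ⟨hCsub, hCM, hCsup⟩ := hPC
  set D := C ⊓ M' with hD
  have hDM' : D ≤ M' := inf_le_right
  have hCC : A.prod C C ≤ D :=
    le_inf hCsub (le_trans (A.prod_mono hCM hCM) le_rfl)
  suffices hDbot : D = ⊥ by
    exact ⟨C, hCsub, hCM, hDbot, hCsup⟩
  by_contra hDne
  by_cases hcase : ∀ c ∈ C, ∀ d ∈ D, ((A.rmul c)^E) d = 0
  · -- all right mults nilpotent on D: C is nilpotent, hence abelian
    obtain ⟨cs, hcsC, hcs⟩ := exists_span_list C
    obtain ⟨m, hm⟩ := A.chain_bot cs D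
      (fun c hc d hd => hCC (A.mem_prod ((inf_le_left : C ⊓ M' ≤ C) hd) (hcsC c hc)))
      (fun c hc c' hc' d hd => by
        -- [d,[c,c']] = 0 since [c,c'] ∈ D ≤ M' and d ∈ D ≤ M'
        have h0 : A.bracket d (A.bracket c c') = 0 :=
          habel' d (hDM' hd) _ (hDM' (hCC (A.mem_prod (hcsC c hc) (hcsC c' hc'))))
        have := A.leibniz d c c'
        rw [h0] at this
        exact (sub_eq_zero.mp this.symm)
      )
      (fun c hc d hd => hcase c (hcsC c hc) d hd)
    have hiter : (fun W => A.prod W (Submodule.span F {x | x ∈ cs})) = fun W => A.prod W C := by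
      rw [hcs]
    rw [hiter] at hm
    have hlcs : ∀ k : ℕ, A.lcs' C (k+1) ≤ (fun W => A.prod W C)^[k] (A.prod C C) := by
      intro k
      induction k with
      | zero => exact le_rfl
      | succ k ih =>
        show A.prod (A.lcs' C (k+1)) C ≤ _
        rw [Function.iterate_succ_apply']
        exact A.prod_mono ih le_rfl
    have hCab : A.prod C C = ⊥ := by
      refine hA C hCsub ⟨m+1, le_antisymm (le_trans (hlcs m) ?_) bot_le⟩
      rw [hm (A.prod C C) hCC]
    -- now C abelian; split off D inside C to get a smaller supplement
    have hDC : D ≤ C := inf_le_left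
    obtain ⟨Q, hQ⟩ := Submodule.exists_isCompl D
    set C₁ := C ⊓ Q with hC₁
    have hsup1 : C₁ ⊔ D = C := by
      have h := sup_inf_assoc_of_le (α := Submodule F L) (y := Q) (x := D) (z := C) hDC
      rw [hQ.codisjoint.eq_top, top_inf_eq] at h
      rw [hC₁, inf_comm C Q, sup_comm]
      exact h.symm
    have hinf1 : C₁ ⊓ D = ⊥ := by
      rw [eq_bot_iff]
      refine le_trans (inf_le_inf_right _ inf_le_right) ?_
      rw [inf_comm, ← disjoint_iff.1 hQ.disjoint]
    have hP1 : P C₁ := by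
      refine ⟨?_, le_trans inf_le_left hCM, ?_⟩
      · show A.prod C₁ C₁ ≤ C₁
        have : A.prod C₁ C₁ ≤ A.prod C C := A.prod_mono inf_le_left inf_le_left
        rw [hCab] at this
        exact le_trans this bot_le
      · have hDM'sup : D ⊔ M' = M' := sup_eq_right.2 hDM'
        rw [← hCsup, ← hsup1, sup_assoc, hDM'sup]
    have hlt : C₁ < C := by
      refine lt_of_le_of_ne inf_le_left ?_
      intro hEq
      apply hDne
      have hDC₁ : D ≤ C₁ := by rw [hEq]; exact hDC
      rw [eq_bot_iff, ← hinf1]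
      exact le_inf hDC₁ le_rfl
    have := hmin C₁ hP1
    have := Submodule.finrank_lt_finrank_of_lt hlt
    omega
  · -- some right multiplication is not nilpotent on D
    push_neg at hcase
    obtain ⟨c, hcC, d, hdD, hdne⟩ := hcase
    set f := A.rmul c with hf
    have hfC : Submodule.map f C ≤ C := by
      rintro z ⟨x, hx, rfl⟩
      exact hCsub (A.mem_prod hx hcC)
    have hfD : Submodule.map f D ≤ D := by
      rintro z ⟨x, hx, rfl⟩
      exact hCC (A.mem_prod ((inf_le_left : C ⊓ M' ≤ C) hx) hcC)
    obtain ⟨hsupf, hinff, hfixf, hkerf⟩ := fit1 f C hfC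
    set C₀ := C ⊓ LinearMap.ker (f^E) with hC₀
    set I := Submodule.map (f^E) C with hI
    have hID : I ≤ D := by
      have h1 : Submodule.map f C ≤ D := by
        rintro z ⟨x, hx, rfl⟩
        exact hCC (A.mem_prod hx hcC)
      have h2 : Submodule.map (f^(E-1)) (Submodule.map f C) = I := by
        rw [← Submodule.map_comp, ← Module.End.mul_eq_comp, ← pow_succ,
          show E - 1 + 1 = E from by omega, hI]
      rw [← h2]
      exact le_trans (Submodule.map_mono h1) (map_pow_le f hfD (E-1))
    have hC₀sub : A.IsSubalgebra C₀ := by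
      rw [IsSubalgebra, prod_le_iff]
      intro x hx y hy
      obtain ⟨hxC, hxk⟩ := Submodule.mem_inf.1 hx
      obtain ⟨hyC, hyk⟩ := Submodule.mem_inf.1 hy
      refine Submodule.mem_inf.2 ⟨hCsub (A.mem_prod hxC hyC), ?_⟩
      rw [LinearMap.mem_ker]
      have h2E : ((A.rmul c)^(2*E-1)) (A.bracket x y) = 0 :=
        A.dk (2*E-1) E E x y (by omega) (LinearMap.mem_ker.1 hxk) (LinearMap.mem_ker.1 hyk)
      have hker : A.bracket x y ∈ LinearMap.ker (f^(2*E-1)) := h2E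
      rw [ker_pow_stab f (by omega : Module.finrank F L + 1 ≤ 2*E-1)] at hker
      exact LinearMap.mem_ker.1 hker
    have hP0 : P C₀ := by
      refine ⟨hC₀sub, le_trans inf_le_left hCM, ?_⟩
      have hIM' : I ⊔ M' = M' := sup_eq_right.2 (le_trans hID hDM')
      rw [← hCsup, ← hsupf, sup_assoc, hIM']
    have hlt : C₀ < C := by
      refine lt_of_le_of_ne inf_le_left ?_
      intro hEq
      apply hdne
      have hdC : d ∈ C := (inf_le_left : C ⊓ M' ≤ C) hdD
      have hdC₀ : d ∈ C₀ := by rw [hEq]; exact hdC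
      exact LinearMap.mem_ker.1 (Submodule.mem_inf.1 hdC₀).2
    have := hmin C₀ hP0
    have := Submodule.finrank_lt_finrank_of_lt hlt
    omega

end Supp

section Metab
variable (A : LeibnizAlg F L) [FiniteDimensional F L]

/-- Core lemma about metabelian subalgebras with an abelian supplement C:
elements of S' right-centralized by C are trivial. -/
lemma metab_core (hA : A.IsAAlgebra') {S C : Submodule F L}
    (hS : A.IsSubalgebra S) (hmet : A.prod (A.prod S S) (A.prod S S) = ⊥)
    (hC : C ≤ S) (hCab : A.prod C C = ⊥) (hsup : C ⊔ A.prod S S = S) :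
    ∀ z ∈ A.prod S S, (∀ c ∈ C, A.bracket z c = 0) → z = 0 := by
  classical
  set E := Module.finrank F L + 1 with hE
  set S' := A.prod S S with hS'
  have hS'S : S' ≤ S := hS
  have hS'r : A.prod S' S ≤ S' := (A.dS_ideal hS 1).1
  have hS'l : A.prod S S' ≤ S' := (A.dS_ideal hS 1).2.1
  have habC := A.abelian_pointwise hCab
  have habS' := A.abelian_pointwise hmet
  obtain ⟨cs, hcsC, hcs⟩ := exists_span_list C
  -- joint Fitting decomposition of S' under C
  have hinvS' : ∀ a ∈ cs, Submodule.map (A.rmul a) S' ≤ S' := by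
    rintro a ha z ⟨v, hv, rfl⟩
    exact hS'r (A.mem_prod hv (hC (hcsC a ha)))
  obtain ⟨S'₁, hS'₁le, hSsup, hSinf, hSprod, hSinv⟩ := A.fitjoint cs S'
    (fun a ha b hb x => A.rr_comm (habC a (hcsC a ha) b (hcsC b hb)) x) hinvS'
  set S'₀ := S' ⊓ A.jker cs with hS'₀
  -- S'₀ is C-invariant on both sides
  have hCS'₀ : A.prod C S'₀ ≤ S'₀ := by
    rw [prod_le_iff]
    intro c hc v hv
    obtain ⟨hvS', hvk⟩ := Submodule.mem_inf.1 hv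
    refine Submodule.mem_inf.2 ⟨hS'l (A.mem_prod (hC hc) hvS'), ?_⟩
    rw [mem_jker]
    intro a ha
    have hca : A.bracket c a = 0 := habC c hc a (hcsC a ha)
    show ((A.rmul a)^E) ((A.bracket c) v) = 0
    rw [← pow_comm_apply (f := A.rmul a) (g := A.bracket c)
      (fun x => (A.lr_comm hca x).symm) E v, (A.mem_jker.1 hvk) a ha, map_zero]
  have hS'₀C : A.prod S'₀ C ≤ S'₀ := by
    rw [prod_le_iff]
    intro v hv c hc
    obtain ⟨hvS', hvk⟩ := Submodule.mem_inf.1 hv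
    have hbr : A.bracket v c ∈ S' := hS'r (A.mem_prod hvS' (hC hc))
    refine Submodule.mem_inf.2 ⟨hbr, ?_⟩
    rw [mem_jker]
    intro a ha
    have hca : A.bracket c a = 0 := habC c hc a (hcsC a ha)
    show ((A.rmul a)^E) ((A.rmul c) v) = 0
    rw [← pow_comm_apply (f := A.rmul a) (g := A.rmul c)
      (fun x => (A.rr_comm hca x).symm) E v, (A.mem_jker.1 hvk) a ha, map_zero]
  have hS'₀S'₀ : A.prod S'₀ S'₀ = ⊥ := by
    refine le_antisymm ?_ bot_le
    refine le_trans (A.prod_mono (le_trans inf_le_left le_rfl) (le_trans inf_le_left le_rfl)) ?_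
    rw [hmet]
  -- C ⊔ S'₀ is a nilpotent subalgebra, hence abelian
  have hcent := A.fitting_null_central hA hcsC hcs hCab hCS'₀ hS'₀C hS'₀S'₀
    (fun a ha v hv => (A.mem_jker.1 (Submodule.mem_inf.1 hv).2) a ha)
  have hCzero : ∀ c ∈ C, ∀ v ∈ S'₀, A.bracket c v = 0 ∧ A.bracket v c = 0 := by
    intro c hc v hv
    constructor
    · have := A.mem_prod (U := C ⊔ S'₀) (V := C ⊔ S'₀)
        (Submodule.mem_sup_left hc) (Submodule.mem_sup_right hv)
      rw [hcent, Submodule.mem_bot] at this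
      exact this
    · have := A.mem_prod (U := C ⊔ S'₀) (V := C ⊔ S'₀)
        (Submodule.mem_sup_right hv) (Submodule.mem_sup_left hc)
      rw [hcent, Submodule.mem_bot] at this
      exact this
  -- S' ≤ S'₁
  have hS'le : S' ≤ S'₁ := by
    have hexp : S' = A.prod (C ⊔ S') (C ⊔ S') := by rw [hsup, hS']
    rw [hexp, A.prod_sup_left, A.prod_sup_right, A.prod_sup_right]
    have h1 : A.prod C C ≤ S'₁ := by rw [hCab]; exact bot_le
    have h4 : A.prod S' S' ≤ S'₁ := by rw [hmet]; exact bot_le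
    have hsplit : S' = S'₀ ⊔ S'₁ := by rw [hS'₀]; exact hSsup.symm
    have h2 : A.prod C S' ≤ S'₁ := by
      rw [hsplit, A.prod_sup_right]
      refine sup_le ?_ ?_
      · rw [prod_le_iff]
        intro c hc v hv
        rw [(hCzero c hc v hv).1]
        exact zero_mem _
      · rw [prod_le_iff]
        intro c hc v hv
        have hcomm : ∀ a ∈ cs, ∀ x : L,
            (A.bracket c) (A.bracket x a) = A.bracket ((A.bracket c) x) a := by
          intro a ha x
          exact (A.lr_comm (habC c hc a (hcsC a ha)) x).symm
        have := hSinv (A.bracket c)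
          (by rintro z ⟨v', hv', rfl⟩; exact hS'l (A.mem_prod (hC hc) hv'))
          hcomm
        exact this ⟨v, hv, rfl⟩
    have h3 : A.prod S' C ≤ S'₁ := by
      rw [hsplit, A.prod_sup_left]
      refine sup_le ?_ ?_
      · rw [prod_le_iff]
        intro v hv c hc
        rw [(hCzero c hc v hv).2]
        exact zero_mem _
      · rw [prod_le_iff]
        intro v hv c hc
        have hcomm : ∀ a ∈ cs, ∀ x : L,
            (A.rmul c) (A.bracket x a) = A.bracket ((A.rmul c) x) a := by
          intro a ha x
          exact (A.rr_comm (habC c hc a (hcsC a ha)) x).symm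
        have := hSinv (A.rmul c)
          (by rintro z ⟨v', hv', rfl⟩; exact hS'r (A.mem_prod hv' (hC hc)))
          hcomm
        exact this ⟨v, hv, rfl⟩
    exact sup_le (sup_le h1 h2) (sup_le h3 h4)
  have hS'₀bot : S'₀ = ⊥ := by
    rw [eq_bot_iff, ← hSinf]
    exact le_inf le_rfl (le_trans (le_trans inf_le_left hS'le) le_rfl)
  -- conclude
  intro z hz hzc
  have : z ∈ S'₀ := by
    refine Submodule.mem_inf.2 ⟨hz, ?_⟩
    rw [mem_jker]
    intro a ha
    have h1 : (A.rmul a) z = 0 := hzc a (hcsC a ha)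
    have : (A.rmul a)^E = (A.rmul a)^(E-1) * (A.rmul a) := by
      rw [← pow_succ, show E - 1 + 1 = E from by omega]
    rw [this, Module.End.mul_apply, h1, map_zero]
  rw [hS'₀bot, Submodule.mem_bot] at this
  exact this

end Metab

section Cartan
variable (A : LeibnizAlg F L) [FiniteDimensional F L]

/-- A self-normalizing abelian subalgebra supplements the derived subalgebra. -/
lemma cartan_sup (hA : A.IsAAlgebra') {S C : Submodule F L}
    (hS : A.IsSubalgebra S) (hC : C ≤ S) (hCab : A.prod C C = ⊥)
    (hN : ∀ x ∈ S, (∀ c ∈ C, A.bracket x c ∈ C ∧ A.bracket c x ∈ C) → x ∈ C) :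
    C ⊔ A.prod S S = S := by
  classical
  set E := Module.finrank F L + 1 with hE
  have habC := A.abelian_pointwise hCab
  obtain ⟨cs, hcsC, hcs⟩ := exists_span_list C
  have hinvS : ∀ a ∈ cs, Submodule.map (A.rmul a) S ≤ S := by
    rintro a ha z ⟨v, hv, rfl⟩
    exact hS (A.mem_prod hv (hC (hcsC a ha)))
  obtain ⟨S₁, hS₁le, hSsup, hSinf, hSprod, hSinv⟩ := A.fitjoint cs S
    (fun a ha b hb x => A.rr_comm (habC a (hcsC a ha) b (hcsC b hb)) x) hinvS
  set S₀ := S ⊓ A.jker cs with hS₀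
  have hS₀S : S₀ ≤ S := inf_le_left
  have hCS₀ : C ≤ S₀ := by
    intro c hcC
    refine Submodule.mem_inf.2 ⟨hC hcC, ?_⟩
    rw [mem_jker]
    intro a ha
    have h1 : (A.rmul a) c = 0 := habC c hcC a (hcsC a ha)
    have : (A.rmul a)^E = (A.rmul a)^(E-1) * (A.rmul a) := by
      rw [← pow_succ, show E - 1 + 1 = E from by omega]
    rw [this, Module.End.mul_apply, h1, map_zero]
  -- S₀ is invariant under rmul c and lmul c for every c ∈ C
  have hrinv : ∀ c ∈ C, ∀ v ∈ S₀, A.bracket v c ∈ S₀ := by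
    intro c hcC v hv
    obtain ⟨hvS, hvk⟩ := Submodule.mem_inf.1 hv
    refine Submodule.mem_inf.2 ⟨hS (A.mem_prod hvS (hC hcC)), ?_⟩
    rw [mem_jker]
    intro a ha
    show ((A.rmul a)^E) ((A.rmul c) v) = 0
    rw [← pow_comm_apply (f := A.rmul a) (g := A.rmul c)
      (fun x => (A.rr_comm (habC c hcC a (hcsC a ha)) x).symm) E v,
      (A.mem_jker.1 hvk) a ha, map_zero]
  have hlinv : ∀ c ∈ C, ∀ v ∈ S₀, A.bracket c v ∈ S₀ := by
    intro c hcC v hv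
    obtain ⟨hvS, hvk⟩ := Submodule.mem_inf.1 hv
    refine Submodule.mem_inf.2 ⟨hS (A.mem_prod (hC hcC) hvS), ?_⟩
    rw [mem_jker]
    intro a ha
    show ((A.rmul a)^E) ((A.bracket c) v) = 0
    rw [← pow_comm_apply (f := A.rmul a) (g := A.bracket c)
      (fun x => (A.lr_comm (habC c hcC a (hcsC a ha)) x).symm) E v,
      (A.mem_jker.1 hvk) a ha, map_zero]
  obtain ⟨m, hm⟩ := A.chain_bot cs S₀
    (fun a ha v hv => hrinv a (hcsC a ha) v hv)
    (fun a ha b hb v _ => A.rr_comm (habC a (hcsC a ha) b (hcsC b hb)) v)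
    (fun a ha v hv => (A.mem_jker.1 (Submodule.mem_inf.1 hv).2) a ha)
  have hiter : (fun W => A.prod W (Submodule.span F {x | x ∈ cs})) = fun W => A.prod W C := by
    rw [hcs]
  rw [hiter] at hm
  -- the normalizer chain
  set Y : ℕ → Submodule F L := fun j =>
    Nat.rec C (fun _ Yj => S₀ ⊓ (⨅ (c : C), Submodule.comap (A.bracket.flip (c : L)) Yj)) j
    with hY
  have hY0 : Y 0 = C := rfl
  have hmemY : ∀ (j : ℕ) (x : L), x ∈ Y (j+1) ↔ x ∈ S₀ ∧ ∀ c ∈ C, A.bracket x c ∈ Y j := by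
    intro j x
    show x ∈ S₀ ⊓ _ ↔ _
    simp only [Submodule.mem_inf, Submodule.mem_iInf, Submodule.mem_comap,
      LinearMap.flip_apply, Subtype.forall]
    exact Iff.rfl
  have hYmono : ∀ j, Y j ≤ Y (j+1) := by
    intro j
    induction j with
    | zero =>
      intro c' hc'
      refine (hmemY 0 c').mpr ⟨hCS₀ hc', fun c hcC => ?_⟩
      rw [hY0, habC c' hc' c hcC]
      exact zero_mem C
    | succ j ih =>
      intro x hx
      have hx' := (hmemY j x).mp hx
      exact (hmemY (j+1) x).mpr ⟨hx'.1, fun c hcC => ih (hx'.2 c hcC)⟩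
  have hprodC : ∀ W : Submodule F L, W ≤ S₀ → A.prod W C ≤ S₀ := by
    intro W hW
    rw [prod_le_iff]
    intro w hw c hcC
    exact hrinv c hcC w (hW hw)
  have hYchain : ∀ (j : ℕ) (W : Submodule F L), W ≤ S₀ →
      (fun W => A.prod W C)^[j] W ≤ C → W ≤ Y j := by
    intro j
    induction j with
    | zero =>
      intro W hWS hWC
      rw [hY0]
      simpa using hWC
    | succ j ih =>
      intro W hWS hWC
      intro x hx
      refine (hmemY j x).mpr ⟨hWS hx, fun c hcC => ?_⟩
      have hW' : A.prod W C ≤ Y j := by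
        refine ih (A.prod W C) (hprodC W hWS) ?_
        rw [← Function.iterate_succ_apply]
        exact hWC
      exact hW' (A.mem_prod hx hcC)
  have hS₀Y : S₀ ≤ Y m := hYchain m S₀ le_rfl (by rw [hm S₀ le_rfl]; exact bot_le)
  -- S₀ = C
  have hS₀C : S₀ = C := by
    refine le_antisymm ?_ hCS₀
    by_contra hne
    have hQm : ¬ Y m ≤ C := fun h => hne (le_trans hS₀Y h)
    have hQex : ∃ j, ¬ Y j ≤ C := ⟨m, hQm⟩
    have hQj₀ : ¬ Y (Nat.find hQex) ≤ C := Nat.find_spec hQex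
    have hj₀pos : 1 ≤ Nat.find hQex := by
      rcases Nat.eq_zero_or_pos (Nat.find hQex) with h0 | h
      · exfalso; apply hQj₀; rw [h0, hY0]
      · exact h
    obtain ⟨j', hj'⟩ : ∃ j', Nat.find hQex = j' + 1 := ⟨Nat.find hQex - 1, by omega⟩
    have hYprev : Y j' ≤ C := by
      by_contra hcon
      exact Nat.find_min hQex (show j' < Nat.find hQex from by omega) hcon
    obtain ⟨x, hxY, hxC⟩ := SetLike.not_le_iff_exists.1 hQj₀
    rw [hj'] at hxY
    have hxmem := (hmemY j' x).mp hxY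
    have hxS₀ := hxmem.1
    have hxnorm : ∀ c ∈ C, A.bracket x c ∈ C := fun c hcC => hYprev (hxmem.2 c hcC)
    by_cases hcase : ∀ c ∈ C, A.bracket c x ∈ C
    · exact hxC (hN x (hS₀S hxS₀) (fun c hcC => ⟨hxnorm c hcC, hcase c hcC⟩))
    · push_neg at hcase
      obtain ⟨cb, hcbC, hzC⟩ := hcase
      set z := A.bracket cb x with hz
      have hzS₀ : z ∈ S₀ := hlinv cb hcbC x hxS₀
      have hzr : ∀ c ∈ C, A.bracket z c = 0 := by
        intro c hcC
        rw [hz, A.lr_comm (habC cb hcbC c hcC) x]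
        exact habC cb hcbC _ (hxnorm c hcC)
      have hzl : ∀ c ∈ C, A.bracket c z = 0 := by
        intro c hcC
        have hlb := A.leibniz c cb x
        have h1 : A.bracket c cb = 0 := habC c hcC cb hcbC
        rw [h1] at hlb
        have h2 : A.bracket (A.bracket c x) cb = 0 := by
          rw [A.lr_comm h1 x]
          exact habC c hcC _ (hxnorm cb hcbC)
        rw [h2] at hlb
        simpa using hlb
      refine hzC (hN z (hS₀S hzS₀) (fun c hcC => ?_))
      rw [hzr c hcC, hzl c hcC]
      exact ⟨zero_mem C, zero_mem C⟩
  -- conclude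
  have hS₁S' : S₁ ≤ A.prod S S := by
    refine le_trans hSprod ?_
    rw [hcs]
    exact A.prod_mono le_rfl hC
  refine le_antisymm (sup_le hC hS) ?_
  have h2 : S₀ ⊔ S₁ ≤ C ⊔ A.prod S S := by
    rw [hS₀C]
    exact sup_le le_sup_left (le_trans hS₁S' le_sup_right)
  exact le_trans (le_of_eq hSsup.symm) h2

end Cartan

section H1
variable (A : LeibnizAlg F L) [FiniteDimensional F L]

lemma h1core {C : Submodule F L} (hCab : A.prod C C = ⊥) :
    ∀ (n : ℕ) (V : Submodule F L), Module.finrank F V ≤ n →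
    (∀ c ∈ C, ∀ v ∈ V, A.bracket v c ∈ V) →
    (∀ v ∈ V, (∀ c ∈ C, A.bracket v c = 0) → v = 0) →
    ∀ κ : L →ₗ[F] L, (∀ c ∈ C, κ c ∈ V) →
    (∀ c ∈ C, ∀ c' ∈ C, A.bracket (κ c) c' = A.bracket (κ c') c) →
    ∃ k ∈ V, ∀ c ∈ C, A.bracket k c = κ c := by
  classical
  set E := Module.finrank F L + 1 with hE
  have habC := A.abelian_pointwise hCab
  -- Engel-type: if all right mults nilpotent on V then V = ⊥
  have engel : ∀ V : Submodule F L, (∀ c ∈ C, ∀ v ∈ V, A.bracket v c ∈ V) →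
      (∀ v ∈ V, (∀ c ∈ C, A.bracket v c = 0) → v = 0) →
      (∀ c ∈ C, ∀ v ∈ V, ((A.rmul c)^E) v = 0) → V = ⊥ := by
    intro V hinv h0 hnilV
    obtain ⟨cs, hcsC, hcs⟩ := exists_span_list C
    obtain ⟨m, hm⟩ := A.chain_bot cs V
      (fun a ha v hv => hinv a (hcsC a ha) v hv)
      (fun a ha b hb v _ => A.rr_comm (habC a (hcsC a ha) b (hcsC b hb)) v)
      (fun a ha v hv => hnilV a (hcsC a ha) v hv)
    have hiter : (fun W => A.prod W (Submodule.span F {x | x ∈ cs})) = fun W => A.prod W C := by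
      rw [hcs]
    rw [hiter] at hm
    by_contra hne
    have hVch : ∀ j, (fun W => A.prod W C)^[j] V ≤ V := by
      intro j
      induction j with
      | zero => exact le_rfl
      | succ j ih =>
        rw [Function.iterate_succ_apply']
        rw [prod_le_iff]
        intro w hw c hcC
        exact hinv c hcC w (ih hw)
    have hex : ∃ j, (fun W => A.prod W C)^[j] V = ⊥ := ⟨m, hm V le_rfl⟩
    have hspec := Nat.find_spec hex
    have hpos : 1 ≤ Nat.find hex := by
      rcases Nat.eq_zero_or_pos (Nat.find hex) with h0' | h
      · exfalso; apply hne; rw [← hspec, h0']; rfl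
      · exact h
    obtain ⟨j', hj'⟩ : ∃ j', Nat.find hex = j' + 1 := ⟨Nat.find hex - 1, by omega⟩
    have hWne : (fun W => A.prod W C)^[j'] V ≠ ⊥ := by
      intro h
      exact Nat.find_min hex (show j' < Nat.find hex from by omega) h
    obtain ⟨v, hvW, hvne⟩ := Submodule.exists_mem_ne_zero_of_ne_bot hWne
    have hvV : v ∈ V := hVch j' hvW
    have hvz : ∀ c ∈ C, A.bracket v c = 0 := by
      intro c hcC
      have : A.bracket v c ∈ (fun W => A.prod W C)^[j' + 1] V := by
        rw [Function.iterate_succ_apply']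
        exact A.mem_prod hvW hcC
      rw [← hj', hspec, Submodule.mem_bot] at this
      exact this
    exact hvne (h0 v hvV hvz)
  intro n
  induction n with
  | zero =>
    intro V hrk hinv h0 κ hκV hcoc
    have hVbot : V = ⊥ := by
      have : Module.finrank F V = 0 := by omega
      exact Submodule.finrank_eq_zero.1 this
    refine ⟨0, zero_mem V, fun c hcC => ?_⟩
    have : κ c = 0 := by
      have := hκV c hcC
      rw [hVbot, Submodule.mem_bot] at this
      exact this
    rw [this, map_zero, LinearMap.zero_apply]
  | succ n ih =>
    intro V hrk hinv h0 κ hκV hcoc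
    by_cases hcase : ∀ c ∈ C, ∀ v ∈ V, ((A.rmul c)^E) v = 0
    · have hVbot : V = ⊥ := engel V hinv h0 hcase
      refine ⟨0, zero_mem V, fun c hcC => ?_⟩
      have : κ c = 0 := by
        have := hκV c hcC
        rw [hVbot, Submodule.mem_bot] at this
        exact this
      rw [this, map_zero, LinearMap.zero_apply]
    · push_neg at hcase
      obtain ⟨cb, hcbC, v₀, hv₀V, hv₀ne⟩ := hcase
      set f := A.rmul cb with hf
      have hfV : Submodule.map f V ≤ V := by
        rintro z ⟨w, hw, rfl⟩
        exact hinv cb hcbC w hw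
      obtain ⟨hsup, hinf, hfix, hker⟩ := fit1 f V hfV
      set V₀ := V ⊓ LinearMap.ker (f^E) with hV₀
      set V₁ := Submodule.map (f^E) V with hV₁
      have hV₀V : V₀ ≤ V := inf_le_left
      have hV₁V : V₁ ≤ V := map_pow_le f hfV E
      -- invariance of V₀ and V₁ under rmul c, c ∈ C
      have hV₀inv : ∀ c ∈ C, ∀ w ∈ V₀, A.bracket w c ∈ V₀ := by
        intro c hcC w hw
        obtain ⟨hwV, hwk⟩ := Submodule.mem_inf.1 hw
        refine Submodule.mem_inf.2 ⟨hinv c hcC w hwV, ?_⟩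
        rw [LinearMap.mem_ker]
        show (f^E) ((A.rmul c) w) = 0
        rw [← pow_comm_apply (f := f) (g := A.rmul c)
          (fun x => (A.rr_comm (habC c hcC cb hcbC) x).symm) E w,
          LinearMap.mem_ker.1 hwk, map_zero]
      have hV₁inv : ∀ c ∈ C, ∀ w ∈ V₁, A.bracket w c ∈ V₁ := by
        intro c hcC w hw
        obtain ⟨u, hu, rfl⟩ := hw
        have : A.bracket ((f^E) u) c = (f^E) (A.bracket u c) := by
          show (A.rmul c) ((f^E) u) = (f^E) ((A.rmul c) u)
          exact pow_comm_apply (f := f) (g := A.rmul c)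
            (fun x => (A.rr_comm (habC c hcC cb hcbC) x).symm) E u
        rw [this]
        exact ⟨A.bracket u c, hinv c hcC u hu, rfl⟩
      -- projections
      obtain ⟨p, hpId, hpKill, hpRange, hpDec⟩ := proj_exists V₀ V₁ V hinf hsup
      have hpcomm : ∀ v ∈ V, ∀ c ∈ C, p (A.bracket v c) = A.bracket (p v) c := by
        intro v hv c hcC
        have hdec : v = p v + (v - p v) := by abel
        have h1 : A.bracket v c = A.bracket (p v) c + A.bracket (v - p v) c := by
          conv_lhs => rw [hdec]
          rw [map_add, LinearMap.add_apply]
        rw [h1, map_add]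
        have h2 : p (A.bracket (p v) c) = A.bracket (p v) c :=
          hpId _ (hV₀inv c hcC (p v) (hpRange v))
        have h3 : p (A.bracket (v - p v) c) = 0 :=
          hpKill _ (hV₁inv c hcC (v - p v) (hpDec v hv))
        rw [h2, h3, add_zero]
      set κ₀ := p.comp κ with hκ₀
      set κ₁ := κ - κ₀ with hκ₁
      have hκ₀V : ∀ c ∈ C, κ₀ c ∈ V₀ := fun c hcC => hpRange (κ c)
      have hκ₁V : ∀ c ∈ C, κ₁ c ∈ V₁ := by
        intro c hcC
        show κ c - p (κ c) ∈ V₁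
        exact hpDec (κ c) (hκV c hcC)
      have hcoc₀ : ∀ c ∈ C, ∀ c' ∈ C, A.bracket (κ₀ c) c' = A.bracket (κ₀ c') c := by
        intro c hcC c' hc'C
        show A.bracket (p (κ c)) c' = A.bracket (p (κ c')) c
        rw [← hpcomm (κ c) (hκV c hcC) c' hc'C, ← hpcomm (κ c') (hκV c' hc'C) c hcC,
          hcoc c hcC c' hc'C]
      have hcoc₁ : ∀ c ∈ C, ∀ c' ∈ C, A.bracket (κ₁ c) c' = A.bracket (κ₁ c') c := by
        intro c hcC c' hc'C
        show A.bracket (κ c - κ₀ c) c' = A.bracket (κ c' - κ₀ c') c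
        rw [map_sub, LinearMap.sub_apply, map_sub, LinearMap.sub_apply,
          hcoc c hcC c' hc'C, hcoc₀ c hcC c' hc'C]
      -- solve on V₁
      have hκ₁cb : κ₁ cb ∈ Submodule.map f V₁ := by rw [hfix]; exact hκ₁V cb hcbC
      obtain ⟨k₁, hk₁V₁, hk₁⟩ := hκ₁cb
      have hk₁sol : ∀ c ∈ C, A.bracket k₁ c = κ₁ c := by
        intro c hcC
        have hwV₁ : A.bracket k₁ c - κ₁ c ∈ V₁ :=
          sub_mem (hV₁inv c hcC k₁ hk₁V₁) (hκ₁V c hcC)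
        have hfw : f (A.bracket k₁ c - κ₁ c) = 0 := by
          show (A.rmul cb) (A.bracket k₁ c - κ₁ c) = 0
          rw [map_sub]
          have h1 : (A.rmul cb) (A.bracket k₁ c) = A.bracket (A.bracket k₁ cb) c := by
            show A.bracket (A.bracket k₁ c) cb = A.bracket (A.bracket k₁ cb) c
            exact A.rr_comm (habC c hcC cb hcbC) k₁
          have h3 : (A.rmul cb) (κ₁ c) = A.bracket (κ₁ cb) c := hcoc₁ c hcC cb hcbC
          rw [h1, h3]
          have h2 : A.bracket k₁ cb = κ₁ cb := hk₁
          rw [h2, sub_self]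
        have : A.bracket k₁ c - κ₁ c ∈ LinearMap.ker f ⊓ V₁ :=
          Submodule.mem_inf.2 ⟨LinearMap.mem_ker.2 hfw, hwV₁⟩
        rw [hker, Submodule.mem_bot] at this
        exact sub_eq_zero.1 this
      -- solve on V₀ by induction
      have hrk₀ : Module.finrank F V₀ ≤ n := by
        have hlt : V₀ < V := by
          refine lt_of_le_of_ne hV₀V ?_
          intro hEq
          apply hv₀ne
          have hin : v₀ ∈ V₀ := by rw [hEq]; exact hv₀V
          exact LinearMap.mem_ker.1 (Submodule.mem_inf.1 hin).2
        have := Submodule.finrank_lt_finrank_of_lt hlt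
        omega
      obtain ⟨k₀, hk₀V₀, hk₀⟩ := ih V₀ hrk₀ hV₀inv
        (fun v hv hz => h0 v (hV₀V hv) hz) κ₀ hκ₀V hcoc₀
      refine ⟨k₀ + k₁, add_mem (hV₀V hk₀V₀) (hV₁V hk₁V₁), fun c hcC => ?_⟩
      have hadd : A.bracket (k₀ + k₁) c = A.bracket k₀ c + A.bracket k₁ c := by
        rw [map_add, LinearMap.add_apply]
      rw [hadd, hk₀ c hcC, hk₁sol c hcC]
      show κ₀ c + (κ c - κ₀ c) = κ c
      abel

end H1

section SplitLast
variable (A : LeibnizAlg F L) [FiniteDimensional F L]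

lemma split_last (hA : A.IsAAlgebra') {S : Submodule F L} (hS : A.IsSubalgebra S)
    {d : ℕ} (hd2 : 2 ≤ d) (hbot : A.dS S d = ⊥) :
    ∃ N : Submodule F L, A.IsSubalgebra N ∧ N ≤ S ∧
      A.dS S (d-1) ⊓ N = ⊥ ∧ A.dS S (d-1) ⊔ N = S := by
  classical
  set E := Module.finrank F L + 1 with hE
  set M := A.dS S (d-2) with hM
  set K := A.dS S (d-1) with hK
  have hKM : K = A.prod M M := by
    rw [hK, hM, show d - 1 = (d-2)+1 from by omega, dS_succ]
  have hKK : A.prod K K = ⊥ := by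
    have h2 : A.dS S (d-1+1) = A.prod K K := A.dS_succ S (d-1)
    rw [show d-1+1 = d from by omega] at h2
    rw [← h2]
    exact hbot
  have hMsub : A.IsSubalgebra M := A.dS_subalg hS (d-2)
  have hmet : A.prod (A.prod M M) (A.prod M M) = ⊥ := by rw [← hKM]; exact hKK
  obtain ⟨C, hCsub, hCM, hCinf, hCsup⟩ := A.supp hA hMsub hmet
  rw [← hKM] at hCinf hCsup
  have hCab : A.prod C C = ⊥ := by
    rw [eq_bot_iff, ← hCinf]
    exact le_inf hCsub (by rw [hKM]; exact A.prod_mono hCM hCM)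
  have habC := A.abelian_pointwise hCab
  have habK := A.abelian_pointwise hKK
  have hKr : A.prod K S ≤ K := (A.dS_ideal hS (d-1)).1
  have hKl : A.prod S K ≤ K := (A.dS_ideal hS (d-1)).2.1
  have hMr : A.prod M S ≤ M := (A.dS_ideal hS (d-2)).1
  have hMl : A.prod S M ≤ M := (A.dS_ideal hS (d-2)).2.1
  have hMS : M ≤ S := A.dS_le_self hS (d-2)
  have hKS : K ≤ S := A.dS_le_self hS (d-1)
  have hCS : C ≤ S := le_trans hCM hMS
  obtain ⟨cs, hcsC, hcs⟩ := exists_span_list C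
  -- Fitting decomposition of K under C
  have hinvK : ∀ a ∈ cs, Submodule.map (A.rmul a) K ≤ K := by
    rintro a ha z ⟨v, hv, rfl⟩
    exact hKr (A.mem_prod hv (hCS (hcsC a ha)))
  obtain ⟨K₁, hK₁le, hKsup, hKinf, hKprod, hKinv⟩ := A.fitjoint cs K
    (fun a ha b hb x => A.rr_comm (habC a (hcsC a ha) b (hcsC b hb)) x) hinvK
  set K₀ := K ⊓ A.jker cs with hK₀
  have hK₀K : K₀ ≤ K := inf_le_left
  -- K₀ is C-invariant on both sides
  have hCK₀ : A.prod C K₀ ≤ K₀ := by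
    rw [prod_le_iff]
    intro c hc v hv
    obtain ⟨hvK, hvk⟩ := Submodule.mem_inf.1 hv
    refine Submodule.mem_inf.2 ⟨hKl (A.mem_prod (hCS hc) hvK), ?_⟩
    rw [mem_jker]
    intro a ha
    show ((A.rmul a)^E) ((A.bracket c) v) = 0
    rw [← pow_comm_apply (f := A.rmul a) (g := A.bracket c)
      (fun x => (A.lr_comm (habC c hc a (hcsC a ha)) x).symm) E v,
      (A.mem_jker.1 hvk) a ha, map_zero]
  have hK₀C : A.prod K₀ C ≤ K₀ := by
    rw [prod_le_iff]
    intro v hv c hc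
    obtain ⟨hvK, hvk⟩ := Submodule.mem_inf.1 hv
    refine Submodule.mem_inf.2 ⟨hKr (A.mem_prod hvK (hCS hc)), ?_⟩
    rw [mem_jker]
    intro a ha
    show ((A.rmul a)^E) ((A.rmul c) v) = 0
    rw [← pow_comm_apply (f := A.rmul a) (g := A.rmul c)
      (fun x => (A.rr_comm (habC c hc a (hcsC a ha)) x).symm) E v,
      (A.mem_jker.1 hvk) a ha, map_zero]
  have hK₀K₀ : A.prod K₀ K₀ = ⊥ := by
    refine le_antisymm ?_ bot_le
    refine le_trans (A.prod_mono hK₀K hK₀K) ?_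
    rw [hKK]
  have hcent := A.fitting_null_central hA hcsC hcs hCab hCK₀ hK₀C hK₀K₀
    (fun a ha v hv => (A.mem_jker.1 (Submodule.mem_inf.1 hv).2) a ha)
  have hCzero : ∀ c ∈ C, ∀ v ∈ K₀, A.bracket c v = 0 ∧ A.bracket v c = 0 := by
    intro c hc v hv
    constructor
    · have := A.mem_prod (U := C ⊔ K₀) (V := C ⊔ K₀)
        (Submodule.mem_sup_left hc) (Submodule.mem_sup_right hv)
      rw [hcent, Submodule.mem_bot] at this
      exact this
    · have := A.mem_prod (U := C ⊔ K₀) (V := C ⊔ K₀)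
        (Submodule.mem_sup_right hv) (Submodule.mem_sup_left hc)
      rw [hcent, Submodule.mem_bot] at this
      exact this
  -- K ≤ K₁, hence K₀ = ⊥
  have hKle : K ≤ K₁ := by
    have hexp : K = A.prod (C ⊔ K) (C ⊔ K) := by rw [hCsup, ← hKM]
    rw [hexp, A.prod_sup_left, A.prod_sup_right, A.prod_sup_right]
    have h1 : A.prod C C ≤ K₁ := by rw [hCab]; exact bot_le
    have h4 : A.prod K K ≤ K₁ := by rw [hKK]; exact bot_le
    have hsplit : K = K₀ ⊔ K₁ := by rw [hK₀]; exact hKsup.symm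
    have h2 : A.prod C K ≤ K₁ := by
      rw [hsplit, A.prod_sup_right]
      refine sup_le ?_ ?_
      · rw [prod_le_iff]
        intro c hc v hv
        rw [(hCzero c hc v hv).1]
        exact zero_mem _
      · rw [prod_le_iff]
        intro c hc v hv
        have := hKinv (A.bracket c)
          (by rintro z ⟨v', hv', rfl⟩; exact hKl (A.mem_prod (hCS hc) hv'))
          (fun a ha x => (A.lr_comm (habC c hc a (hcsC a ha)) x).symm)
        exact this ⟨v, hv, rfl⟩
    have h3 : A.prod K C ≤ K₁ := by
      rw [hsplit, A.prod_sup_left]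
      refine sup_le ?_ ?_
      · rw [prod_le_iff]
        intro v hv c hc
        rw [(hCzero c hc v hv).2]
        exact zero_mem _
      · rw [prod_le_iff]
        intro v hv c hc
        have := hKinv (A.rmul c)
          (by rintro z ⟨v', hv', rfl⟩; exact hKr (A.mem_prod hv' (hCS hc)))
          (fun a ha x => (A.rr_comm (habC c hc a (hcsC a ha)) x).symm)
        exact this ⟨v, hv, rfl⟩
    exact sup_le (sup_le h1 h2) (sup_le h3 h4)
  have hK₀bot : K₀ = ⊥ := by
    rw [eq_bot_iff, ← hKinf]
    exact le_inf le_rfl (le_trans hK₀K hKle)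
  have h0 : ∀ v ∈ K, (∀ c ∈ C, A.bracket v c = 0) → v = 0 := by
    intro v hv hz
    have hmem : v ∈ K₀ := by
      refine Submodule.mem_inf.2 ⟨hv, ?_⟩
      rw [mem_jker]
      intro a ha
      have h1 : (A.rmul a) v = 0 := hz a (hcsC a ha)
      have hpow : (A.rmul a)^E = (A.rmul a)^(E-1) * (A.rmul a) := by
        rw [← pow_succ, show E - 1 + 1 = E from by omega]
      rw [hpow, Module.End.mul_apply, h1, map_zero]
    rw [hK₀bot, Submodule.mem_bot] at hmem
    exact hmem
  -- the normalizer
  set N := A.nrm S C with hN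
  have hNsub : A.IsSubalgebra N := A.nrm_subalg hS
  have hNS : N ≤ S := fun x hx => (A.mem_nrm.1 hx).1
  refine ⟨N, hNsub, hNS, ?_, ?_⟩
  · rw [eq_bot_iff]
    intro x hx
    obtain ⟨hxK, hxN⟩ := Submodule.mem_inf.1 hx
    obtain ⟨hxS, hxn⟩ := A.mem_nrm.1 hxN
    rw [Submodule.mem_bot]
    refine h0 x hxK (fun c hcC => ?_)
    have h1 : A.bracket x c ∈ C := (hxn c hcC).1
    have h2 : A.bracket x c ∈ K := hKr (A.mem_prod hxK (hCS hcC))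
    have := hCinf ▸ Submodule.mem_inf.2 ⟨h1, h2⟩
    simpa using this
  · refine le_antisymm (sup_le hKS hNS) ?_
    intro x hxS
    -- projection of M onto K along C
    obtain ⟨p, hpId, hpKill, hpRange, hpDec⟩ := proj_exists K C M
      (by rw [inf_comm]; exact hCinf) (by rw [sup_comm]; exact hCsup)
    set κ := p.comp (A.bracket x) with hκ
    have hbrM : ∀ c ∈ C, A.bracket x c ∈ M := fun c hcC => hMl (A.mem_prod hxS (hCM hcC))
    have hκK : ∀ c ∈ C, κ c ∈ K := fun c hcC => hpRange _
    have hγ : ∀ c ∈ C, A.bracket x c - κ c ∈ C := fun c hcC => hpDec _ (hbrM c hcC)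
    have hcoc : ∀ c ∈ C, ∀ c' ∈ C, A.bracket (κ c) c' = A.bracket (κ c') c := by
      intro c hcC c' hc'C
      have e1 : A.bracket (κ c) c' = A.bracket (A.bracket x c) c' := by
        have : κ c = A.bracket x c - (A.bracket x c - κ c) := by abel
        rw [this, map_sub, LinearMap.sub_apply, habC _ (hγ c hcC) c' hc'C, sub_zero]
      have e2 : A.bracket (κ c') c = A.bracket (A.bracket x c') c := by
        have : κ c' = A.bracket x c' - (A.bracket x c' - κ c') := by abel
        rw [this, map_sub, LinearMap.sub_apply, habC _ (hγ c' hc'C) c hcC, sub_zero]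
      rw [e1, e2]
      exact A.rr_comm (habC c hcC c' hc'C) x
    obtain ⟨k, hkK, hksol⟩ := A.h1core hCab (Module.finrank F K) K le_rfl
      (fun c hcC v hv => hKr (A.mem_prod hv (hCS hcC))) h0 κ hκK hcoc
    have hxk : x - k ∈ N := by
      rw [hN, mem_nrm]
      refine ⟨sub_mem hxS (hKS hkK), fun c hcC => ⟨?_, ?_⟩⟩
      · have : A.bracket (x - k) c = A.bracket x c - κ c := by
          rw [map_sub, LinearMap.sub_apply, hksol c hcC]
        rw [this]
        exact hγ c hcC
      · -- left normalization
        have hbrM' : A.bracket c x ∈ M := hMr (A.mem_prod (hCM hcC) hxS)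
        have hκ'K : p (A.bracket c x) ∈ K := hpRange _
        have hγ' : A.bracket c x - p (A.bracket c x) ∈ C := hpDec _ hbrM'
        have hckK : A.bracket c k ∈ K := hKl (A.mem_prod (hCS hcC) hkK)
        have hw0 : p (A.bracket c x) - A.bracket c k = 0 := by
          refine h0 _ (sub_mem hκ'K hckK) (fun c' hc'C => ?_)
          have e1 : A.bracket (p (A.bracket c x)) c' = A.bracket c (A.bracket x c') := by
            have hd : p (A.bracket c x) =
                A.bracket c x - (A.bracket c x - p (A.bracket c x)) := by abel
            rw [hd, map_sub, LinearMap.sub_apply, habC _ hγ' c' hc'C, sub_zero]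
            exact A.lr_comm (habC c hcC c' hc'C) x
          have e2 : A.bracket (A.bracket c k) c' = A.bracket c (A.bracket k c') := by
            exact A.lr_comm (habC c hcC c' hc'C) k
          have e3 : A.bracket c (A.bracket x c') = A.bracket c (A.bracket k c') := by
            have hxc' : A.bracket x c' = κ c' + (A.bracket x c' - κ c') := by abel
            rw [hxc', map_add, hksol c' hc'C]
            have : A.bracket c (A.bracket x c' - κ c') = 0 :=
              habC c hcC _ (hγ c' hc'C)
            rw [this, add_zero]
          rw [map_sub, LinearMap.sub_apply, e1, e2, e3, sub_self]
        have : A.bracket c (x - k) = A.bracket c x - A.bracket c k := by rw [map_sub]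
        rw [this]
        have hrw : A.bracket c x - A.bracket c k =
            (A.bracket c x - p (A.bracket c x)) + (p (A.bracket c x) - A.bracket c k) := by
          abel
        rw [hrw, hw0, add_zero]
        exact hγ'
    have : x = k + (x - k) := by abel
    rw [this]
    exact Submodule.add_mem_sup hkK hxk

end SplitLast

section Bullet1
variable (A : LeibnizAlg F L) [FiniteDimensional F L]

lemma bullet1 (hA : A.IsAAlgebra') : ∀ (d : ℕ) (S : Submodule F L), A.IsSubalgebra S →
    A.dS S d = ⊥ → ∀ i, ∃ B : Submodule F L, A.IsSubalgebra B ∧ B ≤ S ∧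
      A.dS S i ⊓ B = ⊥ ∧ A.dS S i ⊔ B = S := by
  intro d
  induction d with
  | zero =>
    intro S hS hbot i
    have hSbot : S = ⊥ := hbot
    refine ⟨⊥, ?_, bot_le, ?_, ?_⟩
    · show A.prod ⊥ ⊥ ≤ ⊥
      rw [A.prod_bot_left]
    · rw [inf_bot_eq]
    · rw [sup_bot_eq, hSbot, A.dS_bot]
  | succ d ih =>
    intro S hS hbot i
    rcases Nat.eq_zero_or_pos i with rfl | hipos
    · exact ⟨⊥, by show A.prod ⊥ ⊥ ≤ ⊥; rw [A.prod_bot_left], bot_le,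
        by rw [inf_bot_eq], by rw [sup_bot_eq]; rfl⟩
    by_cases hd : A.dS S d = ⊥
    · exact ih S hS hd i
    rcases Nat.eq_zero_or_pos d with rfl | hdpos
    · -- S abelian
      have h1 : A.dS S 1 = ⊥ := hbot
      have hi : A.dS S i = ⊥ := A.dS_eq_bot_of_le h1 hipos
      exact ⟨S, hS, le_rfl, by rw [hi, bot_inf_eq], by rw [hi, bot_sup_eq]⟩
    by_cases hi : d + 1 ≤ i
    · have hii : A.dS S i = ⊥ := A.dS_eq_bot_of_le hbot hi
      exact ⟨S, hS, le_rfl, by rw [hii, bot_inf_eq], by rw [hii, bot_sup_eq]⟩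
    push_neg at hi
    have hid : i ≤ d := by omega
    obtain ⟨N, hNsub, hNS, hNinf, hNsup⟩ := A.split_last hA hS
      (show 2 ≤ d + 1 from by omega) hbot
    have hKidx : d + 1 - 1 = d := by omega
    rw [hKidx] at hNinf hNsup
    set K := A.dS S d with hK
    have hKS : K ≤ S := A.dS_le_self hS d
    have hKr : A.prod K S ≤ K := (A.dS_ideal hS d).1
    have hKl : A.prod S K ≤ K := (A.dS_ideal hS d).2.1
    obtain ⟨p, hpId, hpKill, hpRange, hpDec⟩ := proj_exists N K S
      (by rw [inf_comm]; exact hNinf) (by rw [sup_comm]; exact hNsup)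
    have hpN : ∀ v : L, p v ∈ N := hpRange
    -- p is multiplicative on S
    have hpmul : ∀ x ∈ S, ∀ y ∈ S, p (A.bracket x y) = A.bracket (p x) (p y) := by
      intro x hx y hy
      have hxK : x - p x ∈ K := hpDec x hx
      have hyK : y - p y ∈ K := hpDec y hy
      have hdiff : A.bracket x y - A.bracket (p x) (p y) ∈ K := by
        have hexp : A.bracket x y - A.bracket (p x) (p y) =
            A.bracket (x - p x) y + A.bracket (p x) (y - p y) := by
          rw [map_sub, LinearMap.sub_apply, map_sub]
          abel
        rw [hexp]
        exact add_mem (hKr (A.mem_prod hxK hy)) (hKl (A.mem_prod (hNS (hpN x)) hyK))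
      have h1 : p (A.bracket x y - A.bracket (p x) (p y)) = 0 := hpKill _ hdiff
      rw [map_sub] at h1
      have h2 : p (A.bracket (p x) (p y)) = A.bracket (p x) (p y) :=
        hpId _ (hNsub (A.mem_prod (hpN x) (hpN y)))
      rw [h2] at h1
      exact sub_eq_zero.1 h1
    have hmapDS : ∀ j, Submodule.map p (A.dS S j) = A.dS N j := by
      intro j
      induction j with
      | zero =>
        refine le_antisymm ?_ ?_
        · rintro z ⟨x, hx, rfl⟩
          exact hpN x
        · intro nn hn
          exact ⟨nn, hNS hn, hpId nn hn⟩
      | succ j ihj =>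
        have hDsub : A.dS S j ≤ S := A.dS_le_self hS j
        rw [A.dS_succ, A.dS_succ, ← ihj]
        exact A.map_prod_le p (fun x hx y hy => hpmul x (hDsub hx) y (hDsub hy))
    have hdN : A.dS N d = ⊥ := by
      rw [eq_bot_iff, ← hNinf]
      exact le_inf (A.dS_mono hNS d) (A.dS_le_self hNsub d)
    obtain ⟨B, hBsub, hBN, hBinf, hBsup⟩ := ih N hNsub hdN i
    refine ⟨B, hBsub, le_trans hBN hNS, ?_, ?_⟩
    · rw [eq_bot_iff]
      intro x hx
      obtain ⟨hxD, hxB⟩ := Submodule.mem_inf.1 hx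
      have hxN : x ∈ N := hBN hxB
      have hpx : p x = x := hpId x hxN
      have hxDN : x ∈ A.dS N i := by
        rw [← hmapDS i]
        exact ⟨x, hxD, hpx⟩
      rw [← hBinf]
      exact Submodule.mem_inf.2 ⟨hxDN, hxB⟩
    · refine le_antisymm (sup_le (A.dS_le_self hS i) (le_trans hBN hNS)) ?_
      intro s hs
      have h1 : s - p s ∈ K := hpDec s hs
      have h2 : K ≤ A.dS S i := A.dS_antitone hS hid
      have h3 : p s ∈ A.dS N i ⊔ B := by rw [hBsup]; exact hpN s
      have h4 : A.dS N i ⊔ B ≤ A.dS S i ⊔ B :=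
        sup_le (le_trans (A.dS_mono hNS i) le_sup_left) le_sup_right
      have hss : s = (s - p s) + p s := by abel
      rw [hss]
      exact add_mem (Submodule.mem_sup_left (h2 h1)) (h4 h3)

end Bullet1

section MetabIff
variable (A : LeibnizAlg F L) [FiniteDimensional F L]

lemma lcs'_one (C : Submodule F L) : A.lcs' C 1 = A.prod C C := rfl

lemma metab_iff (hA : A.IsAAlgebra') {S C : Submodule F L} (hS : A.IsSubalgebra S)
    (hmet : A.prod (A.prod S S) (A.prod S S) = ⊥) (hCsub : A.IsSubalgebra C) (hCle : C ≤ S) :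
    ((∃ n, A.lcs' C n = ⊥) ∧
      ∀ x ∈ S, (∀ c ∈ C, A.bracket x c ∈ C ∧ A.bracket c x ∈ C) → x ∈ C) ↔
    (C ⊓ A.prod S S = ⊥ ∧ C ⊔ A.prod S S = S) := by
  have hS'r : A.prod (A.prod S S) S ≤ A.prod S S := (A.dS_ideal hS 1).1
  constructor
  · rintro ⟨hnil, hN⟩
    have hCab : A.prod C C = ⊥ := hA C hCsub hnil
    have hsup : C ⊔ A.prod S S = S := A.cartan_sup hA hS hCle hCab hN
    have hz := A.metab_core hA hS hmet hCle hCab hsup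
    refine ⟨?_, hsup⟩
    rw [eq_bot_iff]
    intro x hx
    obtain ⟨hxC, hxS'⟩ := Submodule.mem_inf.1 hx
    rw [Submodule.mem_bot]
    refine hz x hxS' (fun c hcC => ?_)
    exact A.abelian_pointwise hCab x hxC c hcC
  · rintro ⟨hinf, hsup⟩
    have hCab : A.prod C C = ⊥ := by
      rw [eq_bot_iff, ← hinf]
      exact le_inf hCsub (A.prod_mono hCle hCle)
    have habC := A.abelian_pointwise hCab
    have hz := A.metab_core hA hS hmet hCle hCab hsup
    refine ⟨⟨1, by rw [A.lcs'_one, hCab]⟩, ?_⟩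
    intro x hxS hx
    obtain ⟨c₀, hc₀, z, hzS', rfl⟩ := Submodule.mem_sup.1 (hsup ▸ hxS)
    have hzz : ∀ c ∈ C, A.bracket z c = 0 := by
      intro c hcC
      have h1 : A.bracket z c = A.bracket (c₀ + z) c - A.bracket c₀ c := by
        rw [map_add, LinearMap.add_apply]; abel
      have h2 : A.bracket c₀ c = 0 := habC c₀ hc₀ c hcC
      have h3 : A.bracket (c₀ + z) c ∈ C := (hx c hcC).1
      have h4 : A.bracket (c₀ + z) c ∈ A.prod S S := by
        have : A.bracket (c₀ + z) c = A.bracket c₀ c + A.bracket z c := by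
          rw [map_add, LinearMap.add_apply]
        rw [this, h2, zero_add]
        exact hS'r (A.mem_prod hzS' (hCle hcC))
      have h5 : A.bracket (c₀ + z) c = 0 := by
        have := hinf ▸ Submodule.mem_inf.2 ⟨h3, h4⟩
        simpa using this
      rw [h1, h5, h2, sub_zero]
    have hz0 : z = 0 := hz z hzS' hzz
    rw [hz0, add_zero]
    exact hc₀

end MetabIff

section Main
variable (A : LeibnizAlg F L) [FiniteDimensional F L]

theorem main (hA : A.IsAAlgebra') (hsolv : ∃ n, A.dS ⊤ n = ⊥) :
    (∀ i : ℕ, ∃ B : Submodule F L, A.IsSubalgebra B ∧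
        A.dS ⊤ i ⊓ B = ⊥ ∧ A.dS ⊤ i ⊔ B = ⊤) ∧
    (∀ i : ℕ, ∀ C : Submodule F L, A.IsSubalgebra C →
        A.dS ⊤ (i + 2) ≤ C → C ≤ A.dS ⊤ i →
      (((∃ n : ℕ, A.lcs' C n ≤ A.dS ⊤ (i + 2)) ∧
          ∀ x ∈ A.dS ⊤ i,
            (∀ c ∈ C, A.bracket x c ∈ C ∧ A.bracket c x ∈ C) → x ∈ C) ↔
        (C ⊓ A.dS ⊤ (i + 1) = A.dS ⊤ (i + 2) ∧
          C ⊔ A.dS ⊤ (i + 1) = A.dS ⊤ i))) := by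
  classical
  obtain ⟨n, hn⟩ := hsolv
  have htop : A.IsSubalgebra (⊤ : Submodule F L) := le_top
  constructor
  · intro i
    obtain ⟨B, hBsub, _, hBinf, hBsup⟩ := A.bullet1 hA n ⊤ htop hn i
    exact ⟨B, hBsub, hBinf, hBsup⟩
  · intro i C hCsub hC2 hCi
    set M := A.dS ⊤ i with hM
    set M' := A.dS ⊤ (i+1) with hM'
    set M'' := A.dS ⊤ (i+2) with hM''
    have hM'eq : M' = A.prod M M := A.dS_succ ⊤ i
    have hM''eq : M'' = A.prod M' M' := A.dS_succ ⊤ (i+1)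
    have hM'leM : M' ≤ M := A.dS_succ_le htop i
    have hM''leM' : M'' ≤ M' := A.dS_succ_le htop (i+1)
    have hM''leM : M'' ≤ M := le_trans hM''leM' hM'leM
    have hMsub : A.IsSubalgebra M := A.dS_subalg htop i
    have hM''r : A.prod M'' ⊤ ≤ M'' := (A.dS_ideal htop (i+2)).1
    have hM''l : A.prod ⊤ M'' ≤ M'' := (A.dS_ideal htop (i+2)).2.1
    obtain ⟨B, hBsub, _, hBinf, hBsup⟩ := A.bullet1 hA n ⊤ htop hn (i+2)
    obtain ⟨p, hpId, hpKill, hpRange, hpDec'⟩ := proj_exists B M'' ⊤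
      (by rw [inf_comm]; exact hBinf) (by rw [sup_comm]; exact hBsup)
    have hpDec : ∀ v : L, v - p v ∈ M'' := fun v => hpDec' v trivial
    have hker : ∀ x : L, p x = 0 → x ∈ M'' := by
      intro x hx
      have := hpDec x
      rw [hx, sub_zero] at this
      exact this
    have hpmul : ∀ x y : L, p (A.bracket x y) = A.bracket (p x) (p y) := by
      intro x y
      have hdiff : A.bracket x y - A.bracket (p x) (p y) ∈ M'' := by
        have hexp : A.bracket x y - A.bracket (p x) (p y) =
            A.bracket (x - p x) y + A.bracket (p x) (y - p y) := by
          rw [map_sub, LinearMap.sub_apply, map_sub]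
          abel
        rw [hexp]
        exact add_mem (hM''r (A.mem_prod (hpDec x) Submodule.mem_top))
          (hM''l (A.mem_prod Submodule.mem_top (hpDec y)))
      have h1 : p (A.bracket x y - A.bracket (p x) (p y)) = 0 := hpKill _ hdiff
      rw [map_sub] at h1
      have h2 : p (A.bracket (p x) (p y)) = A.bracket (p x) (p y) :=
        hpId _ (hBsub (A.mem_prod (hpRange x) (hpRange y)))
      rw [h2] at h1
      exact sub_eq_zero.1 h1
    set S := B ⊓ M with hSdef
    have hSB : S ≤ B := inf_le_left
    have hSM : S ≤ M := inf_le_right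
    have hfixS : ∀ x ∈ S, p x = x := fun x hx => hpId x (hSB hx)
    have hpM : ∀ m ∈ M, p m ∈ S := by
      intro m hm
      refine Submodule.mem_inf.2 ⟨hpRange m, ?_⟩
      have : p m = m - (m - p m) := by abel
      rw [this]
      exact sub_mem hm (hM''leM (hpDec m))
    have hmapM : Submodule.map p M = S := by
      refine le_antisymm ?_ ?_
      · rintro z ⟨x, hx, rfl⟩
        exact hpM x hx
      · intro x hx
        exact ⟨x, hSM hx, hfixS x hx⟩
    have hSsub : A.IsSubalgebra S := by
      rw [IsSubalgebra]
      refine le_inf (le_trans (A.prod_mono hSB hSB) hBsub) ?_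
      exact le_trans (A.prod_mono hSM hSM) (le_of_eq hM'eq.symm) |>.trans hM'leM
    have hmapprod : ∀ U V : Submodule F L,
        Submodule.map p (A.prod U V) = A.prod (Submodule.map p U) (Submodule.map p V) :=
      fun U V => A.map_prod_le p (fun x _ y _ => hpmul x y)
    have hS'eq : A.prod S S = Submodule.map p M' := by
      rw [hM'eq, hmapprod, hmapM]
    have hS'M' : A.prod S S ≤ M' := by
      rw [hM'eq]
      exact A.prod_mono hSM hSM
    have hmapbot : Submodule.map p M'' = ⊥ := by
      rw [eq_bot_iff]
      rintro z ⟨x, hx, rfl⟩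
      rw [Submodule.mem_bot]
      exact hpKill x hx
    have hmetS : A.prod (A.prod S S) (A.prod S S) = ⊥ := by
      rw [hS'eq, ← hmapprod, ← hM''eq, hmapbot]
    set CS := C ⊓ S with hCS
    have hCSC : CS ≤ C := inf_le_left
    have hCSS : CS ≤ S := inf_le_right
    have hCSsub : A.IsSubalgebra CS := by
      rw [IsSubalgebra]
      exact le_inf (le_trans (A.prod_mono hCSC hCSC) hCsub)
        (le_trans (A.prod_mono hCSS hCSS) hSsub)
    have hpC : ∀ c ∈ C, p c ∈ CS := by
      intro c hc
      refine Submodule.mem_inf.2 ⟨?_, hpM c (hCi hc)⟩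
      have : p c = c - (c - p c) := by abel
      rw [this]
      exact sub_mem hc (hC2 (hpDec c))
    have hmapC : Submodule.map p C = CS := by
      refine le_antisymm ?_ ?_
      · rintro z ⟨x, hx, rfl⟩
        exact hpC x hx
      · intro x hx
        exact ⟨x, hCSC hx, hfixS x (hCSS hx)⟩
    have hCdec : C ≤ M'' ⊔ CS := by
      intro c hc
      have : c = (c - p c) + p c := by abel
      rw [this]
      exact Submodule.add_mem_sup (hpDec c) (hpC c hc)
    have hmaplcs : ∀ m : ℕ, Submodule.map p (A.lcs' C m) = A.lcs' CS m := by
      intro m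
      induction m with
      | zero => exact hmapC
      | succ m ihm =>
        show Submodule.map p (A.prod (A.lcs' C m) C) = A.prod (A.lcs' CS m) CS
        rw [hmapprod, ihm, hmapC]
    have hIFF := A.metab_iff hA hSsub hmetS hCSsub hCSS
    constructor
    · rintro ⟨⟨n', hn'⟩, hNorm⟩
      have hnilS : A.lcs' CS n' = ⊥ := by
        refine le_antisymm ?_ bot_le
        rw [← hmaplcs n']
        exact le_trans (Submodule.map_mono hn') (le_of_eq hmapbot)
      have hnormS : ∀ y ∈ S, (∀ c ∈ CS, A.bracket y c ∈ CS ∧ A.bracket c y ∈ CS) → y ∈ CS := by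
        intro y hyS hy
        have hyC : y ∈ C := by
          refine hNorm y (hSM hyS) (fun c hc => ?_)
          obtain ⟨m'', hm'', cS, hcS, rfl⟩ := Submodule.mem_sup.1 (hCdec hc)
          constructor
          · have : A.bracket y (m'' + cS) = A.bracket y m'' + A.bracket y cS := by
              rw [map_add]
            rw [this]
            exact add_mem (hC2 (hM''l (A.mem_prod Submodule.mem_top hm'')))
              (hCSC (hy cS hcS).1)
          · have : A.bracket (m'' + cS) y = A.bracket m'' y + A.bracket cS y := by
              rw [map_add, LinearMap.add_apply]
            rw [this]
            exact add_mem (hC2 (hM''r (A.mem_prod hm'' Submodule.mem_top)))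
              (hCSC (hy cS hcS).2)
        exact Submodule.mem_inf.2 ⟨hyC, hyS⟩
      obtain ⟨hinfS, hsupS⟩ := hIFF.1 ⟨⟨n', hnilS⟩, hnormS⟩
      constructor
      · refine le_antisymm ?_ (le_inf hC2 hM''leM')
        intro x hx
        obtain ⟨hxC, hxM'⟩ := Submodule.mem_inf.1 hx
        have h1 : p x ∈ CS := by rw [← hmapC]; exact ⟨x, hxC, rfl⟩
        have h2 : p x ∈ A.prod S S := by rw [hS'eq]; exact ⟨x, hxM', rfl⟩
        have h3 : p x = 0 := by
          have := hinfS ▸ Submodule.mem_inf.2 ⟨h1, h2⟩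
          simpa using this
        exact hker x h3
      · refine le_antisymm (sup_le hCi hM'leM) ?_
        intro m hm
        have h1 : p m ∈ CS ⊔ A.prod S S := by rw [hsupS]; exact hpM m hm
        obtain ⟨cS, hcS, s', hs', hps⟩ := Submodule.mem_sup.1 h1
        have hm2 : m = (m - p m) + p m := by abel
        rw [hm2]
        refine add_mem (Submodule.mem_sup_left (hC2 (hpDec m))) ?_
        rw [← hps]
        exact add_mem (Submodule.mem_sup_left (hCSC hcS))
          (Submodule.mem_sup_right (hS'M' hs'))
    · rintro ⟨hc1, hc2⟩
      have hinfS : CS ⊓ A.prod S S = ⊥ := by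
        rw [eq_bot_iff]
        intro x hx
        obtain ⟨hxCS, hxS'⟩ := Submodule.mem_inf.1 hx
        have hxM'' : x ∈ M'' := by
          rw [← hc1]
          exact Submodule.mem_inf.2 ⟨hCSC hxCS, hS'M' hxS'⟩
        have hxB : x ∈ B := hSB (hCSS hxCS)
        have := hBinf ▸ Submodule.mem_inf.2 ⟨hxM'', hxB⟩
        simpa using this
      have hsupS : CS ⊔ A.prod S S = S := by
        refine le_antisymm (sup_le hCSS hSsub) ?_
        intro s hs
        have hsM : s ∈ C ⊔ M' := by rw [hc2]; exact hSM hs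
        obtain ⟨c, hc, m', hm', rfl⟩ := Submodule.mem_sup.1 hsM
        have h1 : p (c + m') = p c + p m' := by rw [map_add]
        have h2 : p (c + m') = c + m' := hfixS _ hs
        rw [← h2, h1]
        exact add_mem (Submodule.mem_sup_left (hpC c hc))
          (Submodule.mem_sup_right (by rw [hS'eq]; exact ⟨m', hm', rfl⟩))
      obtain ⟨⟨nS, hnS⟩, hnormS⟩ := hIFF.2 ⟨hinfS, hsupS⟩
      constructor
      · refine ⟨nS, ?_⟩
        intro x hx
        have h1 : p x ∈ A.lcs' CS nS := by rw [← hmaplcs nS]; exact ⟨x, hx, rfl⟩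
        rw [hnS, Submodule.mem_bot] at h1
        exact hker x h1
      · intro x hxM hx
        have hpxS : p x ∈ S := hpM x hxM
        have hpxCS : p x ∈ CS := by
          refine hnormS (p x) hpxS (fun cS hcS => ?_)
          have hcSC : cS ∈ C := hCSC hcS
          have hpcS : p cS = cS := hfixS cS (hCSS hcS)
          constructor
          · have : A.bracket (p x) cS = p (A.bracket x cS) := by
              rw [hpmul, hpcS]
            rw [this, ← hmapC]
            exact ⟨A.bracket x cS, (hx cS hcSC).1, rfl⟩
          · have : A.bracket cS (p x) = p (A.bracket cS x) := by
              rw [hpmul, hpcS]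
            rw [this, ← hmapC]
            exact ⟨A.bracket cS x, (hx cS hcSC).2, rfl⟩
        have : x = (x - p x) + p x := by abel
        rw [this]
        exact add_mem (hC2 (hpDec x)) (hCSC hpxCS)

end Main

section Bridges
variable {F : Type*} {L : Type*} [Field F] [AddCommGroup L] [Module F L]
variable (A : LeibnizAlg F L)

lemma derSeries_eq_dS_top (i : ℕ) : A.derSeries i = A.dS ⊤ i := by
  induction i with
  | zero => rfl
  | succ i ih =>
    rw [show A.derSeries (i+1) = A.prod (A.derSeries i) (A.derSeries i) from rfl, ih]
    rfl

lemma lcs_eq_lcs' (U : Submodule F L) (m : ℕ) : A.lcs U m = A.lcs' U m := by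
  induction m with
  | zero => rfl
  | succ m ih =>
    rw [show A.lcs U (m+1) = A.prod (A.lcs U m) U from rfl, ih]
    rfl

end Bridges

end LeibnizAlg

/-- A solvable Leibniz A-algebra `L` splits over each term of its derived
series: for every `i` there is a subalgebra `B` with `L = L^(i) ∔ B`.  Moreover, for each
`i` the Cartan subalgebras of `L^(i)/L^(i+2)` (identified with the subalgebras `C` with
`L^(i+2) ≤ C ≤ L^(i)` that are nilpotent mod `L^(i+2)` and self-normalizing in `L^(i)`
mod `L^(i+2)`) are precisely the subalgebras complementary to `L^(i+1)/L^(i+2)` in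
`L^(i)/L^(i+2)`. -/
theorem solvable_A_algebra_splits_over_derived_series
    {F L : Type*} [Field F] [AddCommGroup L] [Module F L] [FiniteDimensional F L]
    (A : LeibnizAlg F L) (hA : A.IsAAlgebra) (hsolv : A.IsSolvable) :
    (∀ i : ℕ, ∃ B : Submodule F L, A.IsSubalgebra B ∧
        A.derSeries i ⊓ B = ⊥ ∧ A.derSeries i ⊔ B = ⊤) ∧
    (∀ i : ℕ, ∀ C : Submodule F L, A.IsSubalgebra C →
        A.derSeries (i + 2) ≤ C → C ≤ A.derSeries i →
      (((∃ n : ℕ, A.lcs C n ≤ A.derSeries (i + 2)) ∧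
          ∀ x ∈ A.derSeries i,
            (∀ c ∈ C, A.bracket x c ∈ C ∧ A.bracket c x ∈ C) → x ∈ C) ↔
        (C ⊓ A.derSeries (i + 1) = A.derSeries (i + 2) ∧
          C ⊔ A.derSeries (i + 1) = A.derSeries i))) := by
  have hA' : A.IsAAlgebra' := by
    intro U hsub hnil
    obtain ⟨n, hn⟩ := hnil
    have : A.IsNilpotentSub U := ⟨n, by rw [LeibnizAlg.lcs_eq_lcs']; exact hn⟩
    exact hA U hsub this
  have hsolv' : ∃ n, A.dS ⊤ n = ⊥ := by
    obtain ⟨n, hn⟩ := hsolv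
    exact ⟨n, by rw [← LeibnizAlg.derSeries_eq_dS_top]; exact hn⟩
  have h := LeibnizAlg.main A hA' hsolv'
  constructor
  · intro i
    obtain ⟨B, h1, h2, h3⟩ := h.1 i
    refine ⟨B, h1, ?_, ?_⟩
    · rw [LeibnizAlg.derSeries_eq_dS_top]; exact h2
    · rw [LeibnizAlg.derSeries_eq_dS_top]; exact h3
  · intro i C hCsub hC2 hCi
    have h2 := h.2 i C hCsub
      (by rw [← LeibnizAlg.derSeries_eq_dS_top]; exact hC2)
      (by rw [← LeibnizAlg.derSeries_eq_dS_top]; exact hCi)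
    simpa only [← LeibnizAlg.derSeries_eq_dS_top, ← LeibnizAlg.lcs_eq_lcs'] using h2
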